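/- arXiv:1707.09777 — 3 statements merged into one kernel-verified Lean document; each statement's English description precedes it below -/
import Mathlib

section
/- Assume (D+) and let (V,u) be a weak solution of either the Lifshitz–Slyozov system or the Lifshitz–Slyozov system with nucleation, with total mass M and V₀ > d(0) (so that d(0) < V(t) ≤ M for all t, and d^{−1} is well defined on [d(0),∞)). Let k : [0,∞) → [0,∞) be C¹ and convex with |k(x)| ≤ C(1+x²) and |k'(x)| ≤ C(1+x) for some constant C, and with k(0) = 0 in the nucleation case. Define K(v) := ∫_{d(0)}^v k'(d^{−1}(s)) ds and H_k(t) := ∫₀^∞ k(x) u(t,x) dx + K(V(t)). Then H_k is differentiable on [0,∞) and for all t ≥ 0: H_k'(t) = ∫₀^∞ u(t,x) (V(t) − d(x)) ( k'(x) − k'(d^{−1}(V(t))) ) dx ≤ 0. -/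
open Set Filter Topology MeasureTheory

/-- Assumption (D+): `d : [0,∞) → [0,∞)` is C¹ with `0 < α ≤ d'(x) ≤ β` for all `x ≥ 0`. -/
structure DPlus (d d' : ℝ → ℝ) (α β : ℝ) : Prop where
  nonneg : ∀ x ∈ Set.Ici (0:ℝ), 0 ≤ d x
  hasDeriv : ∀ x ∈ Set.Ici (0:ℝ), HasDerivWithinAt d (d' x) (Set.Ici 0) x
  contDeriv : ContinuousOn d' (Set.Ici 0)
  alpha_pos : 0 < α
  deriv_lb : ∀ x ∈ Set.Ici (0:ℝ), α ≤ d' x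
  deriv_ub : ∀ x ∈ Set.Ici (0:ℝ), d' x ≤ β

/-- A C¹ test function `φ` (with derivative `φ'`) on `[0,∞)` satisfying
`|φ(x)| ≤ C(1+x²)` and `|φ'(x)| ≤ C(1+x)` for some constant `C`. -/
def IsTest (φ φ' : ℝ → ℝ) : Prop :=
  (∀ x ∈ Set.Ici (0:ℝ), HasDerivWithinAt φ (φ' x) (Set.Ici 0) x) ∧
  ContinuousOn φ' (Set.Ici 0) ∧
  ∃ C : ℝ, ∀ x ∈ Set.Ici (0:ℝ), |φ x| ≤ C * (1 + x ^ 2) ∧ |φ' x| ≤ C * (1 + x)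

/-- Weak solution of the Lifshitz–Slyozov system with nucleation parameter `ε`
(`ε = 0`: no nucleation; `ε = 1`: nucleation with nucleus size `i0`) and total mass `M`:
`V` is C¹ on `[0,∞)`, `u(t,·) ≥ 0` with `(1+x²)u(t,x)` integrable, mass conservation
`V(t) + ∫₀^∞ x u(t,x) dx = M` holds, and for every test function `φ`,
`d/dt ∫₀^∞ φ(x)u(t,x)dx = ∫₀^∞ φ'(x)(V(t)−d(x))u(t,x)dx + ε φ(0) V(t)^{i0}`. -/
structure WeakSolLSN (d : ℝ → ℝ) (M ε : ℝ) (i0 : ℕ) (V : ℝ → ℝ) (u : ℝ → ℝ → ℝ) : Prop where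
  u_nonneg : ∀ t ∈ Set.Ici (0:ℝ), ∀ x ∈ Set.Ici (0:ℝ), 0 ≤ u t x
  V_contDiff : ContDiffOn ℝ 1 V (Set.Ici 0)
  u_int : ∀ t ∈ Set.Ici (0:ℝ), IntegrableOn (fun x => (1 + x ^ 2) * u t x) (Set.Ioi 0)
  mass : ∀ t ∈ Set.Ici (0:ℝ), V t + ∫ x in Set.Ioi (0:ℝ), x * u t x = M
  weak : ∀ φ φ' : ℝ → ℝ, IsTest φ φ' → ∀ t ∈ Set.Ici (0:ℝ),
    HasDerivWithinAt (fun s => ∫ x in Set.Ioi (0:ℝ), φ x * u s x)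
      ((∫ x in Set.Ioi (0:ℝ), φ' x * (V t - d x) * u t x) + ε * φ 0 * V t ^ i0)
      (Set.Ici 0) t

/-- Integrability of `w·u(t,·)` for a continuous weight with quadratic growth. -/
lemma LS_aux_int {u : ℝ → ℝ} (hu_int : IntegrableOn (fun x => (1 + x ^ 2) * u x) (Ioi 0))
    (hu0 : ∀ x ∈ Ioi (0:ℝ), 0 ≤ u x) {w : ℝ → ℝ} (hw : ContinuousOn w (Ici 0)) {c : ℝ}
    (hwb : ∀ x ∈ Ioi (0:ℝ), |w x| ≤ c * (1 + x ^ 2)) :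
    IntegrableOn (fun x => w x * u x) (Ioi 0) := by
  have hmeasu : AEStronglyMeasurable u (volume.restrict (Ioi 0)) := by
    have h1 := hu_int.aestronglyMeasurable
    have h2 : u = fun x => (1 + x ^ 2)⁻¹ * ((1 + x ^ 2) * u x) := by
      funext x
      have : (1:ℝ) + x ^ 2 ≠ 0 := by positivity
      field_simp
    rw [h2]
    exact (((continuous_const.add (continuous_pow 2)).inv₀
      (fun x => by show (1:ℝ) + x ^ 2 ≠ 0; positivity)).aestronglyMeasurable).mul h1
  refine Integrable.mono' (hu_int.const_mul c)
    (((hw.mono Ioi_subset_Ici_self).aestronglyMeasurable measurableSet_Ioi).mul hmeasu) ?_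
  filter_upwards [ae_restrict_mem measurableSet_Ioi] with x hx
  have hux := hu0 x hx
  have hbd := hwb x hx
  calc ‖w x * u x‖ = |w x| * u x := by
        rw [norm_mul, Real.norm_eq_abs, Real.norm_eq_abs, abs_of_nonneg hux]
    _ ≤ c * (1 + x ^ 2) * u x := mul_le_mul_of_nonneg_right hbd hux
    _ = c * ((1 + x ^ 2) * u x) := by ring

set_option maxHeartbeats 1600000 in
/-- Lemma 2.4, entropy inequality adapted from Collet et al.:
under (D+), for a weak solution of the Lifshitz–Slyozov system (`ε = 0`) or with
nucleation (`ε = 1`), with total mass `M` and `V₀ > d(0)`, and for any nonnegative convex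
C¹ function `k` with `|k(x)| ≤ C(1+x²)`, `|k'(x)| ≤ C(1+x)` (and `k(0) = 0` in the
nucleation case), the functional
`H_k(t) = ∫₀^∞ k(x)u(t,x)dx + ∫_{d(0)}^{V(t)} k'(d⁻¹(s)) ds`
is differentiable with
`H_k'(t) = ∫₀^∞ u(t,x)(V(t)−d(x))(k'(x) − k'(d⁻¹(V(t)))) dx ≤ 0`.
Here `dinv` is the inverse of `d : [0,∞) → [d(0),∞)`. -/
theorem LS_entropy_Hk
    (d d' : ℝ → ℝ) (α β : ℝ) (hD : DPlus d d' α β)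
    (dinv : ℝ → ℝ)
    (hdinv_left : ∀ x ∈ Ici (0:ℝ), dinv (d x) = x)
    (hdinv_right : ∀ v ∈ Ici (d 0), 0 ≤ dinv v ∧ d (dinv v) = v)
    (M ε : ℝ) (i0 : ℕ) (hε : ε = 0 ∨ ε = 1) (hi0 : 1 ≤ i0)
    (hM : 0 < M)
    (V : ℝ → ℝ) (u : ℝ → ℝ → ℝ)
    (hsol : WeakSolLSN d M ε i0 V u)
    (hV0 : d 0 < V 0)
    (k k' : ℝ → ℝ)
    (hk_test : IsTest k k')
    (hk_nonneg : ∀ x ∈ Ici (0:ℝ), 0 ≤ k x)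
    (hk_convex : ConvexOn ℝ (Ici 0) k)
    (hk0 : ε = 1 → k 0 = 0) :
    ∀ t ∈ Ici (0:ℝ),
      HasDerivWithinAt
        (fun s => (∫ x in Ioi (0:ℝ), k x * u s x) + ∫ v in (d 0)..(V s), k' (dinv v))
        (∫ x in Ioi (0:ℝ), u t x * (V t - d x) * (k' x - k' (dinv (V t))))
        (Ici 0) t ∧
      (∫ x in Ioi (0:ℝ), u t x * (V t - d x) * (k' x - k' (dinv (V t)))) ≤ 0 := by
  obtain ⟨hk_d, hk'c, Ck, hCk⟩ := hk_test
  have hCk0 : 0 ≤ Ck := by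
    have := (hCk 0 self_mem_Ici).1
    have h0 : (0:ℝ) ≤ |k 0| := abs_nonneg _
    nlinarith
  -- basic facts about d
  have hd_cont : ContinuousOn d (Ici 0) :=
    fun x hx => (hD.hasDeriv x hx).continuousWithinAt
  have hαβ : α ≤ β := le_trans (hD.deriv_lb 0 self_mem_Ici) (hD.deriv_ub 0 self_mem_Ici)
  have hβ : 0 < β := lt_of_lt_of_le hD.alpha_pos hαβ
  have hd0 : 0 ≤ d 0 := hD.nonneg 0 self_mem_Ici
  -- lower MVT bound : α (b - a) ≤ d b - d a  for 0 ≤ a ≤ b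
  have hd_lb : ∀ a ∈ Ici (0:ℝ), ∀ b ∈ Ici (0:ℝ), a ≤ b → α * (b - a) ≤ d b - d a := by
    intro a ha b hb hab
    have hm : MonotoneOn (fun x => d x - α * x) (Ici 0) := by
      apply monotoneOn_of_hasDerivWithinAt_nonneg (convex_Ici 0)
        (hd_cont.sub (continuous_const.mul continuous_id).continuousOn)
        (f' := fun x => d' x - α)
      · intro x hx
        rw [interior_Ici] at hx
        exact ((hD.hasDeriv x (mem_Ici.2 (le_of_lt (mem_Ioi.1 hx)))).sub
          (((hasDerivWithinAt_id x _).const_mul α).congr_deriv (by ring))).mono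
          (by rw [interior_Ici]; exact Ioi_subset_Ici_self)
      · intro x hx
        rw [interior_Ici] at hx
        have := hD.deriv_lb x (mem_Ici.2 (le_of_lt (mem_Ioi.1 hx)))
        linarith
    have := hm ha hb hab
    simp only at this
    linarith
  have hd_mono : ∀ a ∈ Ici (0:ℝ), ∀ b ∈ Ici (0:ℝ), a ≤ b → d a ≤ d b := by
    intro a ha b hb hab
    have h1 := hd_lb a ha b hb hab
    nlinarith [hD.alpha_pos]
  -- upper bound: d x ≤ d 0 + β x for x ≥ 0
  have hd_ub : ∀ x ∈ Ici (0:ℝ), d x ≤ d 0 + β * x := by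
    intro x hx
    have hm : MonotoneOn (fun y => d 0 + β * y - d y) (Ici 0) := by
      apply monotoneOn_of_hasDerivWithinAt_nonneg (convex_Ici 0)
        ((continuousOn_const.add (continuous_const.mul continuous_id).continuousOn).sub hd_cont)
        (f' := fun y => β - d' y)
      · intro y hy
        rw [interior_Ici] at hy
        exact ((((hasDerivWithinAt_id y _).const_mul β).const_add (d 0)).sub
          (hD.hasDeriv y (mem_Ici.2 (le_of_lt (mem_Ioi.1 hy))))).congr_deriv (by ring) |>.mono
          (by rw [interior_Ici]; exact Ioi_subset_Ici_self)
      · intro y hy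
        rw [interior_Ici] at hy
        have := hD.deriv_ub y (mem_Ici.2 (le_of_lt (mem_Ioi.1 hy)))
        linarith
    have := hm (self_mem_Ici) hx hx
    simp only at this
    linarith
  -- continuity of dinv on [d 0, ∞)
  have hdinv_lip : ∀ v ∈ Ici (d 0), ∀ w ∈ Ici (d 0), |dinv v - dinv w| ≤ α⁻¹ * |v - w| := by
    intro v hv w hw
    obtain ⟨hv0, hvd⟩ := hdinv_right v hv
    obtain ⟨hw0, hwd⟩ := hdinv_right w hw
    have key : ∀ p q : ℝ, d 0 ≤ p → d 0 ≤ q → dinv q ≤ dinv p →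
        |dinv p - dinv q| ≤ α⁻¹ * |p - q| := by
      intro p q hp hq hle
      obtain ⟨hp0, hpd⟩ := hdinv_right p hp
      obtain ⟨hq0, hqd⟩ := hdinv_right q hq
      have h1 := hd_lb (dinv q) hq0 (dinv p) hp0 hle
      rw [hpd, hqd] at h1
      have hα := hD.alpha_pos
      have hd_nn : (0:ℝ) ≤ dinv p - dinv q := by linarith
      have hqp : q ≤ p := by nlinarith [mul_nonneg hα.le hd_nn]
      rw [abs_of_nonneg hd_nn, abs_of_nonneg (by linarith : (0:ℝ) ≤ p - q)]
      have h2 : α⁻¹ * (α * (dinv p - dinv q)) ≤ α⁻¹ * (p - q) :=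
        mul_le_mul_of_nonneg_left h1 (inv_nonneg.2 hα.le)
      have h3 : α⁻¹ * α = 1 := inv_mul_cancel₀ hα.ne'
      nlinarith
    rcases le_total (dinv w) (dinv v) with h | h
    · exact key v w hv hw h
    · have := key w v hw hv h
      rwa [abs_sub_comm (dinv w) (dinv v), abs_sub_comm w v] at this
  have hdinv_cont : ContinuousOn dinv (Ici (d 0)) := by
    intro v hv
    have hα := hD.alpha_pos
    apply Metric.continuousWithinAt_iff.2
    intro εp hεp
    refine ⟨α * εp / 2, by positivity, fun {w} hw hdist => ?_⟩
    have := hdinv_lip w hw v hv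
    rw [Real.dist_eq] at hdist ⊢
    calc |dinv w - dinv v| ≤ α⁻¹ * |w - v| := this
      _ ≤ α⁻¹ * (α * εp / 2) := by
          apply mul_le_mul_of_nonneg_left (le_of_lt hdist) (by positivity)
      _ = εp / 2 := by field_simp
      _ < εp := by linarith
  -- test functions 1 and id
  have test_one : IsTest (fun _ => (1:ℝ)) (fun _ => (0:ℝ)) := by
    refine ⟨fun x hx => hasDerivWithinAt_const x _ 1, continuousOn_const, 1, fun x hx => ?_⟩
    constructor
    · rw [abs_one]; nlinarith [sq_nonneg x]
    · rw [abs_zero]; simp only [mem_Ici] at hx; linarith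
  have test_id : IsTest (fun x => x) (fun _ => (1:ℝ)) := by
    refine ⟨fun x hx => hasDerivWithinAt_id x _, continuousOn_const, 1, fun x hx => ?_⟩
    simp only [mem_Ici] at hx
    constructor
    · rw [abs_of_nonneg hx]; nlinarith [sq_nonneg (x - 1)]
    · rw [abs_one]; linarith
  -- integrability facts
  have hu0 : ∀ t ∈ Ici (0:ℝ), ∀ x ∈ Ioi (0:ℝ), 0 ≤ u t x :=
    fun t ht x hx => hsol.u_nonneg t ht x (mem_Ici.2 (le_of_lt (mem_Ioi.1 hx)))
  have int_u : ∀ t ∈ Ici (0:ℝ), IntegrableOn (fun x => u t x) (Ioi 0) := by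
    intro t ht
    have := LS_aux_int (hsol.u_int t ht) (hu0 t ht) (w := fun _ => (1:ℝ))
      continuousOn_const (c := 1) (fun x hx => by rw [abs_one]; nlinarith [sq_nonneg x])
    simpa using this
  have int_Vd : ∀ t ∈ Ici (0:ℝ), IntegrableOn (fun x => (V t - d x) * u t x) (Ioi 0) := by
    intro t ht
    refine LS_aux_int (hsol.u_int t ht) (hu0 t ht) (w := fun x => V t - d x)
      (continuousOn_const.sub hd_cont) (c := |V t| + d 0 + β) (fun x hx => ?_)
    have hx0 : (0:ℝ) ≤ x := le_of_lt hx
    have h1 : |V t - d x| ≤ |V t| + d x := by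
      calc |V t - d x| ≤ |V t| + |d x| := abs_sub _ _
        _ = |V t| + d x := by rw [abs_of_nonneg (hD.nonneg x hx0)]
    have h2 := hd_ub x hx0
    have h3 : (0:ℝ) ≤ |V t| := abs_nonneg _
    nlinarith [sq_nonneg x, sq_nonneg (x - 1)]
  have int_kVd : ∀ t ∈ Ici (0:ℝ), IntegrableOn (fun x => k' x * (V t - d x) * u t x) (Ioi 0) := by
    intro t ht
    have h := LS_aux_int (hsol.u_int t ht) (hu0 t ht) (w := fun x => k' x * (V t - d x))
      (hk'c.mul (continuousOn_const.sub hd_cont)) (c := 2 * Ck * (|V t| + d 0 + β))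
      (fun x hx => ?_)
    · simpa [mul_assoc] using h
    · have hx0 : (0:ℝ) ≤ x := le_of_lt hx
      have h1 : |k' x * (V t - d x)| = |k' x| * |V t - d x| := abs_mul _ _
      have h2 := (hCk x hx0).2
      have h3 : |V t - d x| ≤ |V t| + d 0 + β * x := by
        have := hd_ub x hx0
        calc |V t - d x| ≤ |V t| + |d x| := abs_sub _ _
          _ = |V t| + d x := by rw [abs_of_nonneg (hD.nonneg x hx0)]
          _ ≤ |V t| + d 0 + β * x := by linarith
      rw [h1]
      have h4 : |k' x| * |V t - d x| ≤ (Ck * (1 + x)) * (|V t| + d 0 + β * x) := by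
        apply mul_le_mul h2 h3 (abs_nonneg _)
        positivity
      have h5 : (0:ℝ) ≤ |V t| := abs_nonneg _
      nlinarith [sq_nonneg x, sq_nonneg (x - 1), mul_nonneg hCk0 (sq_nonneg x),
        mul_nonneg (mul_nonneg hCk0 h5) (sq_nonneg (x - 1)),
        mul_nonneg (mul_nonneg hCk0 hd0) (sq_nonneg (x - 1)),
        mul_nonneg (mul_nonneg hCk0 hβ.le) (sq_nonneg (x - 1)),
        mul_nonneg (mul_nonneg hCk0 hβ.le) (sq_nonneg x)]
  have int_dd0 : ∀ t ∈ Ici (0:ℝ), IntegrableOn (fun x => (d x - d 0) * u t x) (Ioi 0) := by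
    intro t ht
    refine LS_aux_int (hsol.u_int t ht) (hu0 t ht) (w := fun x => d x - d 0)
      (hd_cont.sub continuousOn_const) (c := β) (fun x hx => ?_)
    have hx0 : (0:ℝ) ≤ x := le_of_lt hx
    have h1 := hd_ub x hx0
    have h2 := hd_mono 0 self_mem_Ici x hx0 hx0
    show |d x - d 0| ≤ β * (1 + x ^ 2)
    rw [abs_of_nonneg (by linarith)]
    nlinarith [sq_nonneg x]
  -- derivative of ρ(t) = ∫ u
  set R : ℝ → ℝ := fun s => ∫ x in Ioi (0:ℝ), u s x with hR_def
  have hRd : ∀ t ∈ Ici (0:ℝ), HasDerivWithinAt R (ε * V t ^ i0) (Ici 0) t := by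
    intro t ht
    have h := hsol.weak _ _ test_one t ht
    simp only [zero_mul, integral_zero, zero_add, mul_one, one_mul] at h
    exact h
  have hRcont : ContinuousOn R (Ici 0) := fun s hs => (hRd s hs).continuousWithinAt
  -- derivative of V
  have hVd : ∀ t ∈ Ici (0:ℝ),
      HasDerivWithinAt V (-(∫ x in Ioi (0:ℝ), (V t - d x) * u t x)) (Ici 0) t := by
    intro t ht
    have h := hsol.weak _ _ test_id t ht
    simp only [one_mul, mul_zero, zero_mul, add_zero] at h
    have h2 : HasDerivWithinAt (fun s => M - ∫ x in Ioi (0:ℝ), x * u s x)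
        (-(∫ x in Ioi (0:ℝ), (V t - d x) * u t x)) (Ici 0) t := h.const_sub M
    apply h2.congr
    · intro s hs
      have := hsol.mass s hs
      linarith
    · have := hsol.mass t ht
      linarith
  have hVcont : ContinuousOn V (Ici 0) := fun s hs => (hVd s hs).continuousWithinAt
  -- splitting of the drift integral
  have hsplit : ∀ s ∈ Ici (0:ℝ),
      (∫ x in Ioi (0:ℝ), (V s - d x) * u s x)
        = (V s - d 0) * R s - ∫ x in Ioi (0:ℝ), (d x - d 0) * u s x := by
    intro s hs
    have heq : (fun x => (V s - d x) * u s x)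
        = fun x => (V s - d 0) * u s x - (d x - d 0) * u s x := by
      funext x; ring
    rw [heq, integral_sub ((int_u s hs).const_mul (V s - d 0)) (int_dd0 s hs),
      integral_const_mul]
  have hJ_nonneg : ∀ s ∈ Ici (0:ℝ), 0 ≤ ∫ x in Ioi (0:ℝ), (d x - d 0) * u s x := by
    intro s hs
    apply setIntegral_nonneg measurableSet_Ioi
    intro x hx
    have hx0 : (0:ℝ) ≤ x := le_of_lt hx
    exact mul_nonneg (by linarith [hd_mono 0 self_mem_Ici x hx0 hx0]) (hu0 s hs x hx)
  -- positivity: d 0 < V t for all t ≥ 0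
  have hVpos : ∀ t ∈ Ici (0:ℝ), d 0 < V t := by
    by_contra hcon
    push_neg at hcon
    obtain ⟨t₁, ht₁, hVt₁⟩ := hcon
    set S : Set ℝ := {s | s ∈ Ici (0:ℝ) ∧ V s ≤ d 0} with hS_def
    have hS_closed : IsClosed S := by
      have : S = Ici (0:ℝ) ∩ V ⁻¹' (Iic (d 0)) := by
        ext s; simp [hS_def, and_comm]
      rw [this]
      exact hVcont.preimage_isClosed_of_isClosed isClosed_Ici isClosed_Iic
    have hS_ne : S.Nonempty := ⟨t₁, ht₁, hVt₁⟩
    have hS_bdd : BddBelow S := ⟨0, fun s hs => hs.1⟩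
    set t₀ := sInf S with ht₀_def
    have ht₀S : t₀ ∈ S := hS_closed.csInf_mem hS_ne hS_bdd
    have ht₀0 : (0:ℝ) ≤ t₀ := ht₀S.1
    have ht₀pos : 0 < t₀ := by
      rcases ht₀0.lt_or_eq with h | h
      · exact h
      · exfalso; rw [← h] at ht₀S; linarith [ht₀S.2]
    have hbefore : ∀ s, 0 ≤ s → s < t₀ → d 0 < V s := by
      intro s hs0 hst
      by_contra hle
      push_neg at hle
      have : t₀ ≤ s := csInf_le hS_bdd ⟨hs0, hle⟩
      linarith
    have hVt₀ : d 0 ≤ V t₀ := by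
      have hcw : Tendsto V (𝓝[Ico 0 t₀] t₀) (𝓝 (V t₀)) :=
        ((hVd t₀ (le_of_lt ht₀pos)).continuousWithinAt).mono
          (fun s hs => le_of_lt (lt_of_lt_of_le hs.2 le_rfl) |>.trans' hs.1 |> fun _ => hs.1)
      haveI : (𝓝[Ico 0 t₀] t₀).NeBot := by
        rw [nhdsWithin_Ico_eq_nhdsLT ht₀pos]
        infer_instance
      refine ge_of_tendsto hcw ?_
      exact eventually_nhdsWithin_of_forall (fun s hs => le_of_lt (hbefore s hs.1 hs.2))
    have hVIcc : ∀ s ∈ Icc 0 t₀, d 0 ≤ V s := by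
      intro s hs
      rcases hs.2.lt_or_eq with h | h
      · exact le_of_lt (hbefore s hs.1 h)
      · rw [h]; exact hVt₀
    -- bound for R on [0, t₀]
    obtain ⟨z, hz, hzmax⟩ := isCompact_Icc.exists_isMaxOn ⟨0, left_mem_Icc.2 ht₀0⟩
      (hRcont.mono (Icc_subset_Ici_self : Icc (0:ℝ) t₀ ⊆ Ici 0))
    set K := R z with hK_def
    -- the auxiliary function g is monotone on [0, t₀]
    set g : ℝ → ℝ := fun s => (V s - d 0) * Real.exp (K * s) with hg_def
    have hIccIci : Icc (0:ℝ) t₀ ⊆ Ici 0 := Icc_subset_Ici_self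
    have hg_mono : MonotoneOn g (Icc 0 t₀) := by
      apply monotoneOn_of_hasDerivWithinAt_nonneg (convex_Icc 0 t₀)
        (f' := fun s => (-(∫ x in Ioi (0:ℝ), (V s - d x) * u s x)) * Real.exp (K * s)
          + (V s - d 0) * (Real.exp (K * s) * (K * 1)))
      · exact ((hVcont.mono hIccIci).sub continuousOn_const).mul
          ((Real.continuous_exp.comp (continuous_const.mul continuous_id)).continuousOn)
      · intro s hs
        rw [interior_Icc] at hs
        have hs' : s ∈ Ici (0:ℝ) := le_of_lt hs.1
        have hsub : Ioo 0 t₀ ⊆ Ici (0:ℝ) := fun y hy => le_of_lt hy.1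
        have hV' := ((hVd s hs').sub_const (d 0)).mono hsub
        have hexp : HasDerivWithinAt (fun y => Real.exp (K * y))
            (Real.exp (K * s) * (K * 1)) (Ioo 0 t₀) s :=
          ((hasDerivWithinAt_id s _).const_mul K).exp
        rw [interior_Icc]
        exact hV'.mul hexp
      · intro s hs
        rw [interior_Icc] at hs
        have hs' : s ∈ Ici (0:ℝ) := le_of_lt hs.1
        have hB := hsplit s hs'
        have hVs : d 0 ≤ V s := hVIcc s ⟨le_of_lt hs.1, le_of_lt hs.2⟩
        have hRK : R s ≤ K := hzmax ⟨le_of_lt hs.1, le_of_lt hs.2⟩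
        have hJ := hJ_nonneg s hs'
        have hE : (0:ℝ) < Real.exp (K * s) := Real.exp_pos _
        rw [hB]
        have hterm : 0 ≤ (V s - d 0) * (K - R s) := mul_nonneg (by linarith) (by linarith)
        nlinarith
    have h0mem : (0:ℝ) ∈ Icc (0:ℝ) t₀ := left_mem_Icc.2 ht₀0
    have ht₀mem : t₀ ∈ Icc (0:ℝ) t₀ := right_mem_Icc.2 ht₀0
    have := hg_mono h0mem ht₀mem ht₀0
    simp only [hg_def, mul_zero, Real.exp_zero, mul_one] at this
    have hE : (0:ℝ) < Real.exp (K * t₀) := Real.exp_pos _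
    nlinarith [ht₀S.2]
  -- monotonicity of k'
  have hk'_mono : ∀ a ∈ Ici (0:ℝ), ∀ b ∈ Ici (0:ℝ), a ≤ b → k' a ≤ k' b := by
    intro a ha b hb hab
    rcases hab.lt_or_eq with h | h
    · calc k' a ≤ slope k a b :=
            hk_convex.le_slope_of_hasDerivWithinAt ha hb h (hk_d a ha)
        _ ≤ k' b := hk_convex.slope_le_of_hasDerivWithinAt ha hb h (hk_d b hb)
    · rw [h]
  -- main part
  intro t ht
  have hVt : d 0 < V t := hVpos t ht
  obtain ⟨hy0, hdy0⟩ := hdinv_right (V t) (le_of_lt hVt)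
  set c0 := k' (dinv (V t)) with hc0_def
  set B := ∫ x in Ioi (0:ℝ), (V t - d x) * u t x with hB_def
  set A1 := ∫ x in Ioi (0:ℝ), k' x * (V t - d x) * u t x with hA1_def
  -- derivative of the first term
  have h1 : HasDerivWithinAt (fun s => ∫ x in Ioi (0:ℝ), k x * u s x) A1 (Ici 0) t := by
    have h := hsol.weak k k' ⟨hk_d, hk'c, Ck, hCk⟩ t ht
    have hz : ε * k 0 * V t ^ i0 = 0 := by
      rcases hε with h0 | h1
      · rw [h0]; ring
      · rw [hk0 h1]; ring
    rw [hz, add_zero] at h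
    exact h
  -- derivative of the second term
  have hf_cont : ContinuousOn (fun v => k' (dinv v)) (Ici (d 0)) :=
    hk'c.comp hdinv_cont (fun v hv => (hdinv_right v hv).1)
  have hnhds : Ici (d 0) ∈ 𝓝 (V t) := Ici_mem_nhds hVt
  have hfa : ContinuousAt (fun v => k' (dinv v)) (V t) :=
    (hf_cont (V t) (le_of_lt hVt)).continuousAt hnhds
  have hmeas : StronglyMeasurableAtFilter (fun v => k' (dinv v)) (𝓝 (V t)) volume :=
    ContinuousOn.stronglyMeasurableAtFilter isOpen_Ioi
      (hf_cont.mono Ioi_subset_Ici_self) (V t) hVt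
  have hII : IntervalIntegrable (fun v => k' (dinv v)) volume (d 0) (V t) := by
    apply ContinuousOn.intervalIntegrable
    rw [uIcc_of_le (le_of_lt hVt)]
    exact hf_cont.mono Icc_subset_Ici_self
  have hG : HasDerivAt (fun v => ∫ w in (d 0)..v, k' (dinv w)) c0 (V t) :=
    intervalIntegral.integral_hasDerivAt_right hII hmeas hfa
  have h2 : HasDerivWithinAt (fun s => ∫ v in (d 0)..(V s), k' (dinv v))
      (c0 * (-B)) (Ici 0) t :=
    hG.comp_hasDerivWithinAt t (hVd t ht)
  -- combine
  have hsum := h1.add h2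
  have heq : (∫ x in Ioi (0:ℝ), u t x * (V t - d x) * (k' x - c0)) = A1 + c0 * (-B) := by
    have hfun : (fun x => u t x * (V t - d x) * (k' x - c0))
        = fun x => k' x * (V t - d x) * u t x - c0 * ((V t - d x) * u t x) := by
      funext x; ring
    rw [hfun, integral_sub (int_kVd t ht) ((int_Vd t ht).const_mul c0),
      integral_const_mul, hA1_def, hB_def]
    ring
  constructor
  · rw [heq]; exact hsum
  · apply setIntegral_nonpos measurableSet_Ioi
    intro x hx
    have hx0 : (0:ℝ) ≤ x := le_of_lt hx
    have hux := hu0 t ht x hx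
    have hprod : (V t - d x) * (k' x - c0) ≤ 0 := by
      rcases le_total x (dinv (V t)) with hle | hle
      · have h1 : d x ≤ V t := by
          rw [← hdy0]; exact hd_mono x hx0 (dinv (V t)) hy0 hle
        have h2 : k' x ≤ c0 := hk'_mono x hx0 (dinv (V t)) hy0 hle
        exact mul_nonpos_iff.2 (Or.inl ⟨by linarith, by linarith⟩)
      · have h1 : V t ≤ d x := by
          rw [← hdy0]; exact hd_mono (dinv (V t)) hy0 x hx0 hle
        have h2 : c0 ≤ k' x := hk'_mono (dinv (V t)) hy0 x hx0 hle
        exact mul_nonpos_iff.2 (Or.inr ⟨by linarith, by linarith⟩)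
    calc u t x * (V t - d x) * (k' x - c0)
        = u t x * ((V t - d x) * (k' x - c0)) := by ring
      _ ≤ 0 := mul_nonpos_iff.2 (Or.inl ⟨hux, hprod⟩)
end

section
/- Assume (D+) and let (V,u) be a weak solution of the Lifshitz–Slyozov system with nucleation, with total mass M and V₀ > d(0). Then ρ is increasing, ρ(t) → ∞ as t → ∞, and V(t) → d(0) as t → ∞. -/
open Set Filter Topology MeasureTheory

/-- helper: monotone on convex subset of `Ici 0` from derivative within `Ici 0`. -/
lemma LSN_monoOn_helper {f f' : ℝ → ℝ} {s : Set ℝ} (hs : Convex ℝ s) (hsub : s ⊆ Ici 0)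
    (hf : ∀ x ∈ Ici (0:ℝ), HasDerivWithinAt f (f' x) (Ici 0) x)
    (h0 : ∀ x ∈ interior s, 0 ≤ f' x) : MonotoneOn f s :=
  monotoneOn_of_hasDerivWithinAt_nonneg hs
    (fun x hx => ((hf x (hsub hx)).continuousWithinAt).mono hsub)
    (fun x hx => (hf x (hsub (interior_subset hx))).mono ((interior_subset).trans hsub))
    h0

lemma LSN_antiOn_helper {f f' : ℝ → ℝ} {s : Set ℝ} (hs : Convex ℝ s) (hsub : s ⊆ Ici 0)
    (hf : ∀ x ∈ Ici (0:ℝ), HasDerivWithinAt f (f' x) (Ici 0) x)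
    (h0 : ∀ x ∈ interior s, f' x ≤ 0) : AntitoneOn f s :=
  antitoneOn_of_hasDerivWithinAt_nonpos hs
    (fun x hx => ((hf x (hsub hx)).continuousWithinAt).mono hsub)
    (fun x hx => (hf x (hsub (interior_subset hx))).mono ((interior_subset).trans hsub))
    h0

lemma LSN_u_aesm {w : ℝ → ℝ} (hm : IntegrableOn (fun x => (1 + x ^ 2) * w x) (Ioi 0)) :
    AEStronglyMeasurable w (volume.restrict (Ioi 0)) := by
  have h1 : Continuous fun x : ℝ => (1 + x ^ 2)⁻¹ :=
    Continuous.inv₀ (by continuity) (fun x => by positivity)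
  have h2 := h1.aestronglyMeasurable.mul hm.1
  refine h2.congr (Eventually.of_forall fun x => ?_)
  have hx : (1 + x ^ 2 : ℝ) ≠ 0 := by positivity
  exact inv_mul_cancel_left₀ hx (w x)

/-- Domination lemma for integrability. -/
lemma LSN_int_mul {w f : ℝ → ℝ} (hm : IntegrableOn (fun x => (1 + x ^ 2) * w x) (Ioi 0))
    (hnn : ∀ x ∈ Ioi (0:ℝ), 0 ≤ w x)
    (hf : AEStronglyMeasurable f (volume.restrict (Ioi 0)))
    (C : ℝ) (hb : ∀ x ∈ Ioi (0:ℝ), |f x| ≤ C * (1 + x ^ 2)) :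
    IntegrableOn (fun x => f x * w x) (Ioi 0) := by
  refine Integrable.mono' (hm.const_mul C) (hf.mul (LSN_u_aesm hm)) ?_
  filter_upwards [ae_restrict_mem measurableSet_Ioi] with x hx
  have h1 : 0 ≤ w x := hnn x hx
  have h2 : |f x| ≤ C * (1 + x ^ 2) := hb x hx
  have : ‖f x * w x‖ = |f x| * w x := by
    rw [norm_mul]; rw [Real.norm_eq_abs, Real.norm_eq_abs, abs_of_nonneg h1]
  rw [this]
  calc |f x| * w x ≤ (C * (1 + x ^ 2)) * w x := mul_le_mul_of_nonneg_right h2 h1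
    _ = C * ((1 + x ^ 2) * w x) := by ring

set_option maxHeartbeats 2000000 in
/-- Lemma 2.7: under (D+), for a weak solution of the Lifshitz–Slyozov
system with nucleation (`ε = 1`, nucleus size `i0 ≥ 1`), total mass `M` and `V₀ > d(0)`:
the number of polymers `ρ(t) = ∫₀^∞ u(t,x) dx` is increasing and tends to `+∞`,
and `V(t) → d(0)` as `t → ∞`. -/
theorem LSN_rho_diverges
    (d d' : ℝ → ℝ) (α β : ℝ) (hD : DPlus d d' α β)
    (M : ℝ) (hM : 0 < M) (i0 : ℕ) (hi0 : 1 ≤ i0)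
    (V : ℝ → ℝ) (u : ℝ → ℝ → ℝ)
    (hsol : WeakSolLSN d M 1 i0 V u)
    (hV0 : d 0 < V 0) :
    MonotoneOn (fun t => ∫ x in Ioi (0:ℝ), u t x) (Ici 0) ∧
    Tendsto (fun t => ∫ x in Ioi (0:ℝ), u t x) atTop atTop ∧
    Tendsto V atTop (nhds (d 0)) := by
  set ρ : ℝ → ℝ := fun t => ∫ x in Ioi (0:ℝ), u t x with hρdef
  set X : ℝ → ℝ := fun t => ∫ x in Ioi (0:ℝ), x * u t x with hXdef
  set J : ℝ → ℝ := fun t => ∫ x in Ioi (0:ℝ), (V t - d x) * u t x with hJdef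
  have hd0 : 0 ≤ d 0 := hD.nonneg 0 self_mem_Ici
  have hαβ : α ≤ β := le_trans (hD.deriv_lb 0 self_mem_Ici) (hD.deriv_ub 0 self_mem_Ici)
  have hα : 0 < α := hD.alpha_pos
  have hβ : 0 < β := lt_of_lt_of_le hα hαβ
  -- bounds on d
  have hd_lb : ∀ x ∈ Ici (0:ℝ), d 0 + α * x ≤ d x := by
    have h : MonotoneOn (fun x => d x - α * x) (Ici 0) := by
      refine LSN_monoOn_helper (convex_Ici 0) (subset_refl _)
        (f' := fun x => d' x - α * 1)
        (fun x hx => (hD.hasDeriv x hx).sub (((hasDerivAt_id x).const_mul α).hasDerivWithinAt))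
        (fun x hx => ?_)
      rw [interior_Ici] at hx
      have := hD.deriv_lb x (mem_Ici.mpr (le_of_lt hx))
      linarith
    intro x hx
    have := h self_mem_Ici hx (mem_Ici.mp hx)
    simp only [mul_zero, sub_zero] at this
    linarith
  have hd_ub : ∀ x ∈ Ici (0:ℝ), d x ≤ d 0 + β * x := by
    have h : MonotoneOn (fun x => β * x - d x) (Ici 0) := by
      refine LSN_monoOn_helper (convex_Ici 0) (subset_refl _)
        (f' := fun x => β * 1 - d' x)
        (fun x hx => (((hasDerivAt_id x).const_mul β).hasDerivWithinAt).sub (hD.hasDeriv x hx))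
        (fun x hx => ?_)
      rw [interior_Ici] at hx
      have := hD.deriv_ub x (mem_Ici.mpr (le_of_lt hx))
      linarith
    intro x hx
    have := h self_mem_Ici hx (mem_Ici.mp hx)
    simp only [mul_zero, zero_sub] at this
    linarith
  -- integrability
  have huAESM : ∀ t ∈ Ici (0:ℝ), AEStronglyMeasurable (u t) (volume.restrict (Ioi 0)) :=
    fun t ht => LSN_u_aesm (hsol.u_int t ht)
  have hunn : ∀ t ∈ Ici (0:ℝ), ∀ x ∈ Ioi (0:ℝ), 0 ≤ u t x :=
    fun t ht x hx => hsol.u_nonneg t ht x (mem_Ici.mpr (le_of_lt hx))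
  have hInt_u : ∀ t ∈ Ici (0:ℝ), IntegrableOn (u t) (Ioi 0) := by
    intro t ht
    have h := LSN_int_mul (hsol.u_int t ht) (hunn t ht) aestronglyMeasurable_const 1
      (fun x hx => by rw [abs_one]; nlinarith [sq_nonneg x])
    exact h.congr (Eventually.of_forall fun x => one_mul _)
  have hInt_x : ∀ t ∈ Ici (0:ℝ), IntegrableOn (fun x => x * u t x) (Ioi 0) := by
    intro t ht
    refine LSN_int_mul (hsol.u_int t ht) (hunn t ht)
      measurable_id.aestronglyMeasurable 1 (fun x hx => ?_)
    rw [abs_of_pos hx]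
    nlinarith [sq_nonneg (x - 1), mem_Ioi.mp hx]
  have hcontd : ContinuousOn d (Ici 0) := fun x hx => (hD.hasDeriv x hx).continuousWithinAt
  have hInt_d : ∀ t ∈ Ici (0:ℝ), IntegrableOn (fun x => d x * u t x) (Ioi 0) := by
    intro t ht
    refine LSN_int_mul (hsol.u_int t ht) (hunn t ht)
      ((hcontd.mono (Ioi_subset_Ici_self)).aestronglyMeasurable measurableSet_Ioi)
      (d 0 + β) (fun x hx => ?_)
    have hx0 : (0:ℝ) < x := mem_Ioi.mp hx
    have h1 := hD.nonneg x (mem_Ici.mpr hx0.le)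
    have h2 := hd_ub x (mem_Ici.mpr hx0.le)
    rw [abs_of_nonneg h1]
    nlinarith [sq_nonneg x, sq_nonneg (x - 1)]
  -- positivity of integrals
  have hρnn : ∀ t ∈ Ici (0:ℝ), 0 ≤ ρ t :=
    fun t ht => setIntegral_nonneg measurableSet_Ioi (fun x hx => hunn t ht x hx)
  have hXnn : ∀ t ∈ Ici (0:ℝ), 0 ≤ X t :=
    fun t ht => setIntegral_nonneg measurableSet_Ioi
      (fun x hx => mul_nonneg (le_of_lt (mem_Ioi.mp hx)) (hunn t ht x hx))
  have hXeq : ∀ t ∈ Ici (0:ℝ), X t = M - V t := fun t ht => by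
    have := hsol.mass t ht; simp only [hXdef]; linarith
  have hVleM : ∀ t ∈ Ici (0:ℝ), V t ≤ M := fun t ht => by
    have h1 := hXeq t ht; have h2 := hXnn t ht; linarith
  -- derivatives
  have hρd : ∀ t ∈ Ici (0:ℝ), HasDerivWithinAt ρ (V t ^ i0) (Ici 0) t := by
    have htest : IsTest (fun _ => (1:ℝ)) (fun _ => (0:ℝ)) := by
      refine ⟨fun x hx => hasDerivWithinAt_const x _ 1, continuousOn_const, 1, fun x hx => ?_⟩
      constructor
      · rw [abs_one]; nlinarith [sq_nonneg x]
      · rw [abs_zero]; linarith [mem_Ici.mp hx]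
    intro t ht
    have h := hsol.weak _ _ htest t ht
    simp only [one_mul, zero_mul, integral_zero, zero_add] at h
    exact h
  have hXd : ∀ t ∈ Ici (0:ℝ), HasDerivWithinAt X (J t) (Ici 0) t := by
    have htest : IsTest (fun x => x) (fun _ => (1:ℝ)) := by
      refine ⟨fun x hx => hasDerivWithinAt_id x _, continuousOn_const, 1, fun x hx => ?_⟩
      have hx0 := mem_Ici.mp hx
      constructor
      · rw [abs_of_nonneg hx0]; nlinarith [sq_nonneg (x - 1)]
      · rw [abs_one]; linarith
    intro t ht
    have h := hsol.weak _ _ htest t ht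
    simp only [one_mul, mul_zero, zero_mul, add_zero] at h
    exact h
  have hVd : ∀ t ∈ Ici (0:ℝ), HasDerivWithinAt V (-J t) (Ici 0) t := by
    intro t ht
    have h := (hXd t ht).const_sub M
    refine h.congr (fun s hs => ?_) ?_
    · have := hsol.mass s hs; simp only [hXdef]; linarith
    · have := hsol.mass t ht; simp only [hXdef]; linarith
  -- bounds on -J
  have hJeq : ∀ t ∈ Ici (0:ℝ), J t = V t * ρ t - ∫ x in Ioi (0:ℝ), d x * u t x := by
    intro t ht
    have h1 : J t = ∫ x in Ioi (0:ℝ), (V t * u t x - d x * u t x) := by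
      simp only [hJdef]; congr 1; funext x; ring
    rw [h1, integral_sub ((hInt_u t ht).const_mul (V t)) (hInt_d t ht), integral_const_mul]
  have hdu_lb : ∀ t ∈ Ici (0:ℝ), d 0 * ρ t + α * X t ≤ ∫ x in Ioi (0:ℝ), d x * u t x := by
    intro t ht
    have hint1 : IntegrableOn (fun x => d 0 * u t x + α * (x * u t x)) (Ioi 0) :=
      ((hInt_u t ht).const_mul (d 0)).add ((hInt_x t ht).const_mul α)
    have hle : (∫ x in Ioi (0:ℝ), (d 0 * u t x + α * (x * u t x)))
        ≤ ∫ x in Ioi (0:ℝ), d x * u t x := by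
      refine integral_mono_ae hint1 (hInt_d t ht) ?_
      filter_upwards [ae_restrict_mem measurableSet_Ioi] with x hx
      have h1 := hd_lb x (mem_Ici.mpr (le_of_lt (mem_Ioi.mp hx)))
      have h2 := hunn t ht x hx
      nlinarith
    rw [integral_add ((hInt_u t ht).const_mul (d 0)) ((hInt_x t ht).const_mul α),
      integral_const_mul, integral_const_mul] at hle
    exact hle
  have hdu_ub : ∀ t ∈ Ici (0:ℝ), (∫ x in Ioi (0:ℝ), d x * u t x) ≤ d 0 * ρ t + β * X t := by
    intro t ht
    have hint1 : IntegrableOn (fun x => d 0 * u t x + β * (x * u t x)) (Ioi 0) :=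
      ((hInt_u t ht).const_mul (d 0)).add ((hInt_x t ht).const_mul β)
    have hle : (∫ x in Ioi (0:ℝ), d x * u t x)
        ≤ ∫ x in Ioi (0:ℝ), (d 0 * u t x + β * (x * u t x)) := by
      refine integral_mono_ae (hInt_d t ht) hint1 ?_
      filter_upwards [ae_restrict_mem measurableSet_Ioi] with x hx
      have h1 := hd_ub x (mem_Ici.mpr (le_of_lt (mem_Ioi.mp hx)))
      have h2 := hunn t ht x hx
      nlinarith
    rw [integral_add ((hInt_u t ht).const_mul (d 0)) ((hInt_x t ht).const_mul β),
      integral_const_mul, integral_const_mul] at hle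
    exact hle
  have hJlb : ∀ t ∈ Ici (0:ℝ), α * X t - (V t - d 0) * ρ t ≤ -J t := by
    intro t ht
    have h1 := hJeq t ht
    have h2 := hdu_lb t ht
    nlinarith
  have hJub : ∀ t ∈ Ici (0:ℝ), -J t ≤ β * X t - (V t - d 0) * ρ t := by
    intro t ht
    have h1 := hJeq t ht
    have h2 := hdu_ub t ht
    nlinarith
  -- continuity
  have hcontV : ContinuousOn V (Ici 0) := (hsol.V_contDiff).continuousOn
  have hcontρ : ContinuousOn ρ (Ici 0) := fun t ht => (hρd t ht).continuousWithinAt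
  -- W stays positive
  have hWpos : ∀ t ∈ Ici (0:ℝ), d 0 < V t := by
    by_contra hcon
    push_neg at hcon
    obtain ⟨t₀, ht₀, hVt₀⟩ := hcon
    set S := Icc (0:ℝ) t₀ ∩ V ⁻¹' Iic (d 0) with hSdef
    have hScl : IsClosed S :=
      (hcontV.mono (Icc_subset_Ici_self)).preimage_isClosed_of_isClosed isClosed_Icc isClosed_Iic
    have hSne : S.Nonempty := ⟨t₀, ⟨mem_Ici.mp ht₀, le_rfl⟩, hVt₀⟩
    have hSbdd : BddBelow S := BddBelow.mono inter_subset_left bddBelow_Icc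
    set t₁ := sInf S with ht₁def
    have ht₁S : t₁ ∈ S := hScl.csInf_mem hSne hSbdd
    have h0t₁ : 0 ≤ t₁ := ht₁S.1.1
    have hVt₁ : V t₁ ≤ d 0 := ht₁S.2
    have hbefore : ∀ s, 0 ≤ s → s < t₁ → d 0 < V s := by
      intro s h0 hlt
      by_contra hc; push_neg at hc
      have hsS : s ∈ S := ⟨⟨h0, le_trans (le_of_lt hlt) ht₁S.1.2⟩, hc⟩
      exact absurd (csInf_le hSbdd hsS) (not_le.mpr hlt)
    obtain ⟨z, hz, hzmax'⟩ := (isCompact_Icc : IsCompact (Icc (0:ℝ) t₁)).exists_isMaxOn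
      (nonempty_Icc.mpr h0t₁) (hcontρ.mono Icc_subset_Ici_self)
    have hzmax : ∀ y ∈ Icc (0:ℝ) t₁, ρ y ≤ ρ z := fun y hy => hzmax' hy
    set L := ρ z with hLdef
    have hgmono : MonotoneOn (fun s => (V s - d 0) * Real.exp (L * s)) (Icc 0 t₁) := by
      refine LSN_monoOn_helper (convex_Icc 0 t₁) Icc_subset_Ici_self
        (f' := fun s => (-J s) * Real.exp (L * s) + (V s - d 0) * (Real.exp (L * s) * (L * 1)))
        (fun x hx => ((hVd x hx).sub_const (d 0)).mul
          (((hasDerivAt_id x).const_mul L).exp.hasDerivWithinAt)) ?_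
      intro x hx
      rw [interior_Icc] at hx
      have hx0 : (0:ℝ) ≤ x := le_of_lt hx.1
      have hxI : x ∈ Ici (0:ℝ) := mem_Ici.mpr hx0
      have h1 := hJlb x hxI
      have h2 : ρ x ≤ L := hzmax x ⟨hx0, le_of_lt hx.2⟩
      have h3 := hbefore x hx0 hx.2
      have h4 := hXnn x hxI
      have he : (0:ℝ) < Real.exp (L * x) := Real.exp_pos _
      have k1 : (α * X x - (V x - d 0) * ρ x) * Real.exp (L * x)
          ≤ (-J x) * Real.exp (L * x) := mul_le_mul_of_nonneg_right h1 he.le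
      have k2 : 0 ≤ α * X x := mul_nonneg hα.le h4
      have k3 : 0 ≤ (V x - d 0) * (L - ρ x) :=
        mul_nonneg (sub_pos.mpr h3).le (sub_nonneg.mpr h2)
      nlinarith [mul_nonneg (add_nonneg k2 k3) he.le]
    have hcmp := hgmono (left_mem_Icc.mpr h0t₁) (right_mem_Icc.mpr h0t₁) h0t₁
    have hg0 : 0 < (V 0 - d 0) * Real.exp (L * 0) :=
      mul_pos (sub_pos.mpr hV0) (Real.exp_pos _)
    have hg1 : (V t₁ - d 0) * Real.exp (L * t₁) ≤ 0 :=
      mul_nonpos_of_nonpos_of_nonneg (sub_nonpos.mpr hVt₁) (Real.exp_pos _).le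
    dsimp only at hcmp
    linarith
  have hMd0 : d 0 < M := lt_of_lt_of_le hV0 (hVleM 0 self_mem_Ici)
  -- monotonicity of ρ
  have hmono : MonotoneOn ρ (Ici 0) := by
    refine LSN_monoOn_helper (convex_Ici 0) (subset_refl _) hρd fun x hx => ?_
    rw [interior_Ici] at hx
    exact pow_nonneg (le_trans hd0 (le_of_lt (hWpos x (mem_Ici.mpr (le_of_lt hx))))) i0
  -- ρ tends to infinity
  have hρtop : Tendsto ρ atTop atTop := by
    by_cases hub : ∀ L0 : ℝ, ∃ s, 0 ≤ s ∧ L0 < ρ s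
    · rw [tendsto_atTop]
      intro b
      obtain ⟨t₀, ht₀, hb⟩ := hub b
      filter_upwards [eventually_ge_atTop t₀, eventually_ge_atTop (0:ℝ)] with t h1 h2
      exact le_of_lt (lt_of_lt_of_le hb (hmono (mem_Ici.mpr ht₀) (mem_Ici.mpr h2) h1))
    · exfalso
      push_neg at hub
      obtain ⟨L, hL⟩ := hub
      have hL0 : 0 ≤ L := le_trans (hρnn 0 self_mem_Ici) (hL 0 le_rfl)
      set c := α * (M - d 0) with hcdef
      set K := α + L with hKdef
      have hcpos : 0 < c := mul_pos hα (sub_pos.mpr hMd0)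
      have hKpos : 0 < K := by rw [hKdef]; linarith
      have hgmono : MonotoneOn (fun s => (V s - d 0 - c / K) * Real.exp (K * s)) (Ici 0) := by
        refine LSN_monoOn_helper (convex_Ici 0) (subset_refl _)
          (f' := fun s => (-J s) * Real.exp (K * s)
            + (V s - d 0 - c / K) * (Real.exp (K * s) * (K * 1)))
          (fun x hx => (((hVd x hx).sub_const (d 0)).sub_const (c / K)).mul
            (((hasDerivAt_id x).const_mul K).exp.hasDerivWithinAt)) ?_
        intro x hx
        rw [interior_Ici] at hx
        have hxI : x ∈ Ici (0:ℝ) := mem_Ici.mpr hx.le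
        have h1 := hJlb x hxI
        have h2 : ρ x ≤ L := hL x hx.le
        have h3 := hWpos x hxI
        have h4 := hXeq x hxI
        have he : (0:ℝ) < Real.exp (K * x) := Real.exp_pos _
        have k1 : c / K * K = c := div_mul_cancel₀ c (ne_of_gt hKpos)
        have k2 : 0 ≤ (V x - d 0) * (L - ρ x) :=
          mul_nonneg (sub_pos.mpr h3).le (sub_nonneg.mpr h2)
        have k3 : 0 ≤ -J x + (V x - d 0 - c / K) * K := by
          have h5 : α * X x = c - α * (V x - d 0) := by rw [h4, hcdef]; ring
          have kK : (V x - d 0 - c / K) * K = (V x - d 0) * K - c := by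
            field_simp
          rw [kK, hKdef]
          linarith [h1, k2, h5]
        have k4 := mul_nonneg k3 he.le
        have k5 : (-J x) * Real.exp (K * x)
            + (V x - d 0 - c / K) * (Real.exp (K * x) * (K * 1))
            = (-J x + (V x - d 0 - c / K) * K) * Real.exp (K * x) := by ring
        rw [k5]
        exact k4
      set g0 := (V 0 - d 0 - c / K) * Real.exp (K * 0) with hg0def
      have hkey : ∀ t, 0 ≤ t → c / K + g0 * Real.exp (-(K * t)) ≤ V t - d 0 := by
        intro t ht
        have h1 := hgmono self_mem_Ici (mem_Ici.mpr ht) ht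
        dsimp only at h1
        have he : (0:ℝ) < Real.exp (K * t) := Real.exp_pos _
        have h2 : g0 / Real.exp (K * t) ≤ V t - d 0 - c / K := by
          rw [div_le_iff₀ he]; exact h1
        rw [Real.exp_neg, ← div_eq_mul_inv]
        linarith
      have hev : ∀ᶠ t in atTop, -(c / (2 * K)) ≤ g0 * Real.exp (-(K * t)) := by
        have h1 : Tendsto (fun t : ℝ => K * t) atTop atTop :=
          Tendsto.const_mul_atTop hKpos tendsto_id
        have h2 : Tendsto (fun t : ℝ => -(K * t)) atTop atBot :=
          tendsto_neg_atTop_atBot.comp h1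
        have h3 := Real.tendsto_exp_atBot.comp h2
        have h4 : Tendsto (fun t : ℝ => g0 * Real.exp (-(K * t))) atTop (nhds (g0 * 0)) :=
          h3.const_mul g0
        rw [mul_zero] at h4
        have h5 : -(c / (2 * K)) < 0 := by
          have : 0 < c / (2 * K) := by positivity
          linarith
        exact h4.eventually (eventually_ge_nhds h5)
      obtain ⟨T, hT⟩ := eventually_atTop.mp (hev.and (eventually_ge_atTop (0:ℝ)))
      have hT0 : 0 ≤ T := (hT T le_rfl).2
      set w := c / (2 * K) with hwdef
      have hw : 0 < w := by positivity
      have hWlow : ∀ t, T ≤ t → w ≤ V t := by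
        intro t ht
        have h1 := hkey t (le_trans hT0 ht)
        have h2 := (hT t ht).1
        have hid : c / K - c / (2 * K) = c / (2 * K) := by field_simp; ring
        have h3 : w ≤ V t - d 0 := by rw [hwdef]; linarith
        linarith
      set r := w ^ i0 with hrdef
      have hr : 0 < r := pow_pos hw i0
      have hhmono : MonotoneOn (fun s => ρ s - r * s) (Ici T) := by
        refine LSN_monoOn_helper (convex_Ici T) (Ici_subset_Ici.mpr hT0)
          (f' := fun s => V s ^ i0 - r * 1)
          (fun x hx => (hρd x hx).sub (((hasDerivAt_id x).const_mul r).hasDerivWithinAt)) ?_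
        intro x hx
        rw [interior_Ici] at hx
        have h1 := hWlow x hx.le
        have h2 : w ^ i0 ≤ V x ^ i0 := pow_le_pow_left₀ hw.le h1 i0
        rw [hrdef]
        linarith
      set t2 := T + (L + 1) / r with ht2def
      have hquot : 0 ≤ (L + 1) / r := div_nonneg (by linarith) hr.le
      have ht2 : T ≤ t2 := by rw [ht2def]; linarith
      have h6 := hhmono self_mem_Ici (mem_Ici.mpr ht2) ht2
      dsimp only at h6
      have hρT := hρnn T (mem_Ici.mpr hT0)
      have hrt : r * t2 - r * T = L + 1 := by
        have ha : r * ((L + 1) / r) = L + 1 := by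
          rw [mul_comm, div_mul_cancel₀ _ (ne_of_gt hr)]
        rw [ht2def, mul_add]
        linarith [ha]
      have h7 := hL t2 (le_trans hT0 ht2)
      linarith
  -- V tends to d 0
  have hVlim : Tendsto V atTop (nhds (d 0)) := by
    have hWlim : Tendsto (fun t => V t - d 0) atTop (nhds 0) := by
      rw [Metric.tendsto_atTop]
      intro δ hδ
      set B := β * (M - d 0) with hBdef
      have hBpos : 0 < B := mul_pos hβ (sub_pos.mpr hMd0)
      set R := 4 * B / δ with hRdef
      have hR0 : 0 ≤ R := by positivity
      obtain ⟨T₀, hT₀⟩ := eventually_atTop.mp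
        ((tendsto_atTop.mp hρtop R).and (eventually_ge_atTop (0:ℝ)))
      have hT0nn : 0 ≤ T₀ := (hT₀ T₀ le_rfl).2
      have hWub : ∀ t, 0 ≤ t → -J t ≤ B - (V t - d 0) * ρ t := by
        intro t ht
        have h1 := hJub t (mem_Ici.mpr ht)
        have h2 := hXeq t (mem_Ici.mpr ht)
        have h3 := hWpos t (mem_Ici.mpr ht)
        have h4 : β * X t ≤ B := by
          rw [h2, hBdef]
          have := mul_le_mul_of_nonneg_left (by linarith : M - V t ≤ M - d 0) hβ.le
          linarith
        linarith
      have hdec : ∀ t, T₀ ≤ t → δ / 2 ≤ V t - d 0 → -J t ≤ -B := by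
        intro t ht hW
        have h0t : 0 ≤ t := (hT₀ t ht).2
        have h1 := hWub t h0t
        have h2 := (hT₀ t ht).1
        have h3 : δ / 2 * R ≤ (V t - d 0) * ρ t :=
          mul_le_mul hW h2 hR0 (by linarith)
        have h4 : δ / 2 * R = 2 * B := by
          rw [hRdef]
          field_simp
          ring
        linarith
      have ha : ∃ t₁, T₀ ≤ t₁ ∧ V t₁ - d 0 < δ / 2 := by
        by_contra hc
        push_neg at hc
        have hanti : AntitoneOn (fun s => (V s - d 0) + B * s) (Ici T₀) := by
          refine LSN_antiOn_helper (convex_Ici _) (Ici_subset_Ici.mpr hT0nn)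
            (f' := fun s => -J s + B * 1)
            (fun x hx => ((hVd x hx).sub_const (d 0)).add
              (((hasDerivAt_id x).const_mul B).hasDerivWithinAt)) ?_
          intro x hx
          rw [interior_Ici] at hx
          have := hdec x hx.le (hc x hx.le)
          linarith
        set t2 := T₀ + (M - d 0) / B + 1 with ht2def
        have hq : 0 ≤ (M - d 0) / B := div_nonneg (sub_pos.mpr hMd0).le hBpos.le
        have ht2 : T₀ ≤ t2 := by rw [ht2def]; linarith
        have h5 := hanti self_mem_Ici (mem_Ici.mpr ht2) ht2
        dsimp only at h5
        have hBq : B * ((M - d 0) / B) = M - d 0 := by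
          rw [mul_comm, div_mul_cancel₀ _ (ne_of_gt hBpos)]
        have h6 : B * t2 - B * T₀ = (M - d 0) + B := by
          rw [ht2def, mul_add, mul_add, hBq]
          ring
        have ht2nn : (0:ℝ) ≤ t2 := le_trans hT0nn ht2
        have h7 := hVleM T₀ (mem_Ici.mpr hT0nn)
        have h8 := hWpos t2 (mem_Ici.mpr ht2nn)
        linarith
      obtain ⟨t₁, ht₁T, ht₁⟩ := ha
      have hT0t₁ : 0 ≤ t₁ := le_trans hT0nn ht₁T
      have hb : ∀ t, t₁ ≤ t → V t - d 0 < δ := by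
        intro t ht
        by_contra hc
        push_neg at hc
        set S := Icc t₁ t ∩ V ⁻¹' Iic (d 0 + δ / 2) with hSdef
        have hsubI : Icc t₁ t ⊆ Ici (0:ℝ) := fun y hy => le_trans hT0t₁ hy.1
        have hScl : IsClosed S :=
          (hcontV.mono hsubI).preimage_isClosed_of_isClosed isClosed_Icc isClosed_Iic
        have hSne : S.Nonempty := ⟨t₁, ⟨le_rfl, ht⟩, by
          simp only [mem_preimage, mem_Iic]; linarith⟩
        have hSbdd : BddAbove S := BddAbove.mono inter_subset_left bddAbove_Icc
        set s := sSup S with hsdef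
        have hsS : s ∈ S := hScl.csSup_mem hSne hSbdd
        have hst : s ≤ t := hsS.1.2
        have ht₁s : t₁ ≤ s := hsS.1.1
        have hVs : V s ≤ d 0 + δ / 2 := hsS.2
        have hmid : ∀ y, s < y → y ≤ t → d 0 + δ / 2 < V y := by
          intro y hy1 hy2
          by_contra hc2
          push_neg at hc2
          have hyS : y ∈ S := ⟨⟨le_trans ht₁s hy1.le, hy2⟩, hc2⟩
          exact absurd (le_csSup hSbdd hyS) (not_le.mpr hy1)
        have hanti : AntitoneOn V (Icc s t) := by
          refine LSN_antiOn_helper (convex_Icc s t)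
            (fun y hy => le_trans (le_trans hT0t₁ ht₁s) hy.1)
            (f' := fun x => -J x) hVd ?_
          intro x hx
          rw [interior_Icc] at hx
          have h1 := hmid x hx.1 hx.2.le
          have h2 := hdec x (le_trans ht₁T (le_trans ht₁s hx.1.le)) (by linarith)
          linarith
        have h9 := hanti (left_mem_Icc.mpr hst) (right_mem_Icc.mpr hst) hst
        linarith
      refine ⟨max t₁ 0, fun t ht => ?_⟩
      have h1 : t₁ ≤ t := le_trans (le_max_left _ _) ht
      have h2 : (0:ℝ) ≤ t := le_trans (le_max_right _ _) ht
      rw [Real.dist_eq, sub_zero, abs_of_pos (sub_pos.mpr (hWpos t (mem_Ici.mpr h2)))]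
      exact hb t h1
    have h := hWlim.add_const (d 0)
    rw [zero_add] at h
    convert h using 2 with t
    ring
  exact ⟨hmono, hρtop, hVlim⟩
end

section
/- Assume (D+) and let (V,u) be a weak solution of the Lifshitz–Slyozov system with nucleation, with total mass M and V₀ > d(0). Then the second moment M₂(t) := (1/2) ∫₀^∞ x² u(t,x) dx tends to 0 as t → ∞. -/
open Set Filter Topology MeasureTheory

set_option maxHeartbeats 1000000

/-- Monotonicity from nonnegative derivative within `Ici 0` on a subinterval. -/
lemma LSN.mono_piece {f f' : ℝ → ℝ} {a b : ℝ} (ha : 0 ≤ a) (hab : a ≤ b)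
    (hf : ∀ t ∈ Icc a b, HasDerivWithinAt f (f' t) (Ici 0) t)
    (hf0 : ∀ t ∈ Icc a b, 0 ≤ f' t) : f a ≤ f b := by
  have hsub : Icc a b ⊆ Ici (0:ℝ) := fun t ht => le_trans ha ht.1
  have hsub' : interior (Icc a b) ⊆ Ici (0:ℝ) := fun t ht => hsub (interior_subset ht)
  have hc : ContinuousOn f (Icc a b) :=
    fun t ht => ((hf t ht).continuousWithinAt).mono hsub
  have hmono : MonotoneOn f (Icc a b) := by
    refine monotoneOn_of_hasDerivWithinAt_nonneg (convex_Icc a b) hc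
      (fun t ht => ((hf t (interior_subset ht)).mono hsub')) ?_
    · intro t ht
      rw [interior_Icc] at ht
      exact hf0 t (Ioo_subset_Icc_self ht)
  exact hmono ⟨le_rfl, hab⟩ ⟨hab, le_rfl⟩ hab

lemma LSN.growth_lower {f f' : ℝ → ℝ} {a b k : ℝ} (ha : 0 ≤ a) (hab : a ≤ b)
    (hf : ∀ t ∈ Icc a b, HasDerivWithinAt f (f' t) (Ici 0) t)
    (hk : ∀ t ∈ Icc a b, k ≤ f' t) : f a + k * (b - a) ≤ f b := by
  have h := LSN.mono_piece (f := fun t => f t - k * t) (f' := fun t => f' t - k) ha hab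
    (fun t ht =>
      ((hf t ht).sub (((hasDerivWithinAt_id t (Ici (0:ℝ))).const_mul k))).congr_deriv (by ring))
    (fun t ht => by simpa using hk t ht)
  linarith

lemma LSN.growth_upper {f f' : ℝ → ℝ} {a b K : ℝ} (ha : 0 ≤ a) (hab : a ≤ b)
    (hf : ∀ t ∈ Icc a b, HasDerivWithinAt f (f' t) (Ici 0) t)
    (hK : ∀ t ∈ Icc a b, f' t ≤ K) : f b ≤ f a + K * (b - a) := by
  have h := LSN.growth_lower (f := fun t => -f t) (f' := fun t => -f' t) (k := -K) ha hab
    (fun t ht => (hf t ht).neg) (fun t ht => by simpa using hK t ht)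
  linarith

/-- Barrier lemma: if `f ≥ c` at `a` and `f' ≥ 0` whenever `f ≤ c`, then `f ≥ c` at `b`. -/
lemma LSN.barrier {f f' : ℝ → ℝ} {a b c : ℝ} (ha : 0 ≤ a) (hab : a ≤ b)
    (hf : ∀ t ∈ Icc a b, HasDerivWithinAt f (f' t) (Ici 0) t)
    (hfa : c ≤ f a)
    (hd : ∀ t ∈ Icc a b, f t ≤ c → 0 ≤ f' t) : c ≤ f b := by
  by_contra hb
  push_neg at hb
  have hsub : Icc a b ⊆ Ici (0:ℝ) := fun t ht => le_trans ha ht.1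
  have hc : ContinuousOn f (Icc a b) :=
    fun t ht => ((hf t ht).continuousWithinAt).mono hsub
  set S : Set ℝ := Icc a b ∩ f ⁻¹' {c} with hS
  have hSne : S.Nonempty := by
    have h1 : c ∈ Icc (f b) (f a) := ⟨le_of_lt hb, hfa⟩
    obtain ⟨s₀, hs₀, hfs₀⟩ := intermediate_value_Icc' hab hc h1
    exact ⟨s₀, hs₀, by simpa using hfs₀⟩
  have hScl : IsClosed S := hc.preimage_isClosed_of_isClosed isClosed_Icc isClosed_singleton
  have hScp : IsCompact S := isCompact_Icc.of_isClosed_subset hScl inter_subset_left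
  set s := sSup S with hs
  have hsS : s ∈ S := hScp.sSup_mem hSne
  have hsab : s ∈ Icc a b := hsS.1
  have hfs : f s = c := by simpa using hsS.2
  have hBdd : BddAbove S := hScp.bddAbove
  have key : ∀ t ∈ Icc s b, f t ≤ c := by
    intro t ht
    rcases eq_or_lt_of_le ht.1 with rfl | hst
    · exact le_of_eq hfs
    · by_contra hgt
      push_neg at hgt
      have htab : t ∈ Icc a b := ⟨le_trans hsab.1 ht.1, ht.2⟩
      have hct : ContinuousOn f (Icc t b) := hc.mono (Icc_subset_Icc htab.1 le_rfl)
      have h1 : c ∈ Icc (f b) (f t) := ⟨le_of_lt hb, le_of_lt hgt⟩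
      obtain ⟨r, hr, hfr⟩ := intermediate_value_Icc' ht.2 hct h1
      have hrS : r ∈ S := ⟨⟨le_trans htab.1 hr.1, hr.2⟩, by simpa using hfr⟩
      have : r ≤ s := le_csSup hBdd hrS
      linarith [hr.1]
  have hmono := LSN.mono_piece (f := f) (f' := f') (a := s) (b := b)
    (le_trans ha hsab.1) hsS.1.2
    (fun t ht => hf t ⟨le_trans hsab.1 ht.1, ht.2⟩)
    (fun t ht => hd t ⟨le_trans hsab.1 ht.1, ht.2⟩ (key t ht))
  rw [hfs] at hmono
  linarith

/-- Upcrossing extraction. -/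
lemma LSN.crossing {f : ℝ → ℝ} {a b y₁ y₂ : ℝ} (hab : a ≤ b) (hf : ContinuousOn f (Icc a b))
    (h12 : y₁ < y₂) (hfa : f a < y₁) (hfb : y₂ < f b) :
    ∃ s₁ s₂, a ≤ s₁ ∧ s₁ ≤ s₂ ∧ s₂ ≤ b ∧ f s₁ = y₁ ∧ f s₂ = y₂ ∧
      ∀ t ∈ Icc s₁ s₂, y₁ ≤ f t ∧ f t ≤ y₂ := by
  set S₂ : Set ℝ := Icc a b ∩ f ⁻¹' {y₂} with hS₂
  have hS₂ne : S₂.Nonempty := by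
    obtain ⟨r, hr, hfr⟩ := intermediate_value_Icc hab hf ⟨le_of_lt (lt_trans hfa h12), le_of_lt hfb⟩
    exact ⟨r, hr, by simpa using hfr⟩
  have hS₂cl : IsClosed S₂ := hf.preimage_isClosed_of_isClosed isClosed_Icc isClosed_singleton
  have hS₂cp : IsCompact S₂ := isCompact_Icc.of_isClosed_subset hS₂cl inter_subset_left
  set s₂ := sInf S₂ with hs₂def
  have hs₂S : s₂ ∈ S₂ := hS₂cp.sInf_mem hS₂ne
  have hs₂ab : s₂ ∈ Icc a b := hs₂S.1
  have hfs₂ : f s₂ = y₂ := by simpa using hs₂S.2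
  have hBdd₂ : BddBelow S₂ := hS₂cp.bddBelow
  have hlt : ∀ t ∈ Ico a s₂, f t < y₂ := by
    intro t ht
    by_contra hge
    push_neg at hge
    have hct : ContinuousOn f (Icc a t) := hf.mono (Icc_subset_Icc le_rfl (le_trans ht.2.le hs₂ab.2))
    obtain ⟨r, hr, hfr⟩ := intermediate_value_Icc ht.1 hct ⟨le_of_lt (lt_trans hfa h12), hge⟩
    have hrS : r ∈ S₂ := ⟨⟨hr.1, le_trans hr.2 (le_trans ht.2.le hs₂ab.2)⟩, by simpa using hfr⟩
    have := csInf_le hBdd₂ hrS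
    linarith [hr.2, ht.2]
  have hfc2 : ContinuousOn f (Icc a s₂) := hf.mono (Icc_subset_Icc le_rfl hs₂ab.2)
  set S₁ : Set ℝ := Icc a s₂ ∩ f ⁻¹' {y₁} with hS₁
  have hS₁ne : S₁.Nonempty := by
    obtain ⟨r, hr, hfr⟩ := intermediate_value_Icc hs₂ab.1 hfc2
      ⟨le_of_lt hfa, by rw [hfs₂]; exact le_of_lt h12⟩
    exact ⟨r, hr, by simpa using hfr⟩
  have hS₁cl : IsClosed S₁ := hfc2.preimage_isClosed_of_isClosed isClosed_Icc isClosed_singleton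
  have hS₁cp : IsCompact S₁ := isCompact_Icc.of_isClosed_subset hS₁cl inter_subset_left
  set s₁ := sSup S₁ with hs₁def
  have hs₁S : s₁ ∈ S₁ := hS₁cp.sSup_mem hS₁ne
  have hfs₁ : f s₁ = y₁ := by simpa using hs₁S.2
  have hBdd₁ : BddAbove S₁ := hS₁cp.bddAbove
  have hgt : ∀ t ∈ Ioc s₁ s₂, y₁ < f t := by
    intro t ht
    by_contra hle
    push_neg at hle
    have hct : ContinuousOn f (Icc t s₂) :=
      hfc2.mono (Icc_subset_Icc (le_trans hs₁S.1.1 ht.1.le) le_rfl)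
    obtain ⟨r, hr, hfr⟩ := intermediate_value_Icc ht.2 hct
      ⟨hle, by rw [hfs₂]; exact le_of_lt h12⟩
    have hrS : r ∈ S₁ := ⟨⟨le_trans hs₁S.1.1 (le_trans ht.1.le hr.1), hr.2⟩, by simpa using hfr⟩
    have := le_csSup hBdd₁ hrS
    linarith [hr.1, ht.1]
  refine ⟨s₁, s₂, hs₁S.1.1, hs₁S.1.2, hs₂ab.2, hfs₁, hfs₂, ?_⟩
  intro t ht
  constructor
  · rcases eq_or_lt_of_le ht.1 with rfl | h
    · exact le_of_eq hfs₁.symm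
    · exact le_of_lt (hgt t ⟨h, ht.2⟩)
  · rcases eq_or_lt_of_le ht.2 with rfl | h
    · exact le_of_eq hfs₂
    · exact le_of_lt (hlt t ⟨le_trans hs₁S.1.1 ht.1, h⟩)

lemma LSN.aesm_u {u : ℝ → ℝ} (hu_int : IntegrableOn (fun x => (1 + x ^ 2) * u x) (Ioi 0)) :
    AEStronglyMeasurable u (volume.restrict (Ioi (0:ℝ))) := by
  have h1 : AEStronglyMeasurable (fun x => (1 + x ^ 2) * u x) (volume.restrict (Ioi (0:ℝ))) :=
    hu_int.aestronglyMeasurable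
  have hc : Continuous fun x : ℝ => (1 + x ^ 2)⁻¹ := by
    apply Continuous.inv₀ (by continuity)
    intro x; positivity
  have h2 : AEStronglyMeasurable (fun x => (1 + x ^ 2)⁻¹ * ((1 + x ^ 2) * u x))
      (volume.restrict (Ioi (0:ℝ))) := hc.aestronglyMeasurable.restrict.mul h1
  have heq : (fun x : ℝ => (1 + x ^ 2)⁻¹ * ((1 + x ^ 2) * u x)) = u := by
    funext x
    have : (1 : ℝ) + x ^ 2 ≠ 0 := by positivity
    field_simp
  rwa [heq] at h2

lemma LSN.integrable_weight {u : ℝ → ℝ} (hu_int : IntegrableOn (fun x => (1 + x ^ 2) * u x) (Ioi 0))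
    (hu_nn : ∀ x ∈ Ici (0:ℝ), 0 ≤ u x)
    {f : ℝ → ℝ} (hf : ContinuousOn f (Ici 0)) {C : ℝ}
    (hC : ∀ x ∈ Ici (0:ℝ), |f x| ≤ C * (1 + x ^ 2)) :
    IntegrableOn (fun x => f x * u x) (Ioi 0) := by
  have hum := LSN.aesm_u hu_int
  have hfm : AEStronglyMeasurable f (volume.restrict (Ioi (0:ℝ))) :=
    (hf.mono Ioi_subset_Ici_self).aestronglyMeasurable measurableSet_Ioi
  refine Integrable.mono (hu_int.const_mul C) (hfm.mul hum) ?_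
  filter_upwards [ae_restrict_mem measurableSet_Ioi] with x hx
  have hx0 : (0:ℝ) ≤ x := le_of_lt hx
  have hu0 : 0 ≤ u x := hu_nn x (mem_Ici.mpr hx0)
  have hfb := hC x (mem_Ici.mpr hx0)
  have h1 : ‖f x * u x‖ = |f x| * u x := by
    rw [norm_mul, Real.norm_eq_abs, Real.norm_eq_abs, abs_of_nonneg hu0]
  have h2 : ‖C * ((1 + x ^ 2) * u x)‖ = |C * ((1 + x ^ 2) * u x)| := Real.norm_eq_abs _
  rw [h1, h2]
  have hC0 : 0 ≤ C := by
    have := hC 0 (mem_Ici.mpr le_rfl)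
    have := abs_nonneg (f 0)
    nlinarith
  have : |C * ((1 + x ^ 2) * u x)| = C * ((1 + x ^ 2) * u x) := by
    apply abs_of_nonneg; positivity
  rw [this]
  calc |f x| * u x ≤ C * (1 + x ^ 2) * u x := by
        apply mul_le_mul_of_nonneg_right hfb hu0
    _ = C * ((1 + x ^ 2) * u x) := by ring

/-- Lemma 2.8: under (D+), for a weak solution of the Lifshitz–Slyozov
system with nucleation (`ε = 1`, nucleus size `i0 ≥ 1`), total mass `M` and `V₀ > d(0)`,
the second moment `M₂(t) = (1/2)∫₀^∞ x² u(t,x) dx` tends to `0` as `t → ∞`. -/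
theorem LSN_second_moment_vanishes
    (d d' : ℝ → ℝ) (α β : ℝ) (hD : DPlus d d' α β)
    (M : ℝ) (hM : 0 < M) (i0 : ℕ) (hi0 : 1 ≤ i0)
    (V : ℝ → ℝ) (u : ℝ → ℝ → ℝ)
    (hsol : WeakSolLSN d M 1 i0 V u)
    (hV0 : d 0 < V 0) :
    Tendsto (fun t => (1 / 2) * ∫ x in Ioi (0:ℝ), x ^ 2 * u t x) atTop (nhds 0) := by
  obtain ⟨hu_nn, hV_cd, hu_int, hmass, hweak⟩ := hsol
  -- basic constants
  have hd0 : 0 ≤ d 0 := hD.nonneg 0 (mem_Ici.mpr le_rfl)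
  have hα : 0 < α := hD.alpha_pos
  have hαβ : α ≤ β :=
    le_trans (hD.deriv_lb 0 (mem_Ici.mpr le_rfl)) (hD.deriv_ub 0 (mem_Ici.mpr le_rfl))
  have hβ : 0 < β := lt_of_lt_of_le hα hαβ
  -- bounds on d
  have hd_ub : ∀ x : ℝ, 0 ≤ x → d x ≤ d 0 + β * x := by
    intro x hx
    have h := LSN.growth_upper (f := d) (f' := d') (a := 0) (b := x) le_rfl hx
      (fun s hs => hD.hasDeriv s (mem_Ici.mpr hs.1))
      (fun s hs => hD.deriv_ub s (mem_Ici.mpr hs.1))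
    simpa using h
  have hd_lb : ∀ x : ℝ, 0 ≤ x → d 0 + α * x ≤ d x := by
    intro x hx
    have h := LSN.growth_lower (f := d) (f' := d') (a := 0) (b := x) le_rfl hx
      (fun s hs => hD.hasDeriv s (mem_Ici.mpr hs.1))
      (fun s hs => hD.deriv_lb s (mem_Ici.mpr hs.1))
    simpa using h
  have hd_cont : ContinuousOn d (Ici (0:ℝ)) :=
    fun x hx => (hD.hasDeriv x hx).continuousWithinAt
  -- test functions
  have test1 : IsTest (fun _ => (1:ℝ)) (fun _ => (0:ℝ)) := by
    refine ⟨fun x _ => hasDerivWithinAt_const x _ 1, continuousOn_const, 1, fun x hx => ?_⟩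
    have hx0 : (0:ℝ) ≤ x := hx
    constructor
    · rw [abs_one]; nlinarith [sq_nonneg x]
    · rw [abs_zero]; nlinarith
  have testx : IsTest (fun x => x) (fun _ => (1:ℝ)) := by
    refine ⟨fun x _ => hasDerivWithinAt_id x _, continuousOn_const, 1, fun x hx => ?_⟩
    have hx0 : (0:ℝ) ≤ x := hx
    constructor
    · rw [abs_of_nonneg hx0]; nlinarith [sq_nonneg (x - 1)]
    · rw [abs_one]; nlinarith
  have testx2 : IsTest (fun x => x ^ 2) (fun x => 2 * x) := by
    refine ⟨fun x _ => by simpa using (hasDerivWithinAt_pow 2 x : HasDerivWithinAt _ _ (Ici (0:ℝ)) x),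
      (continuous_const.mul continuous_id).continuousOn, 2, fun x hx => ?_⟩
    have hx0 : (0:ℝ) ≤ x := hx
    constructor
    · show |x ^ 2| ≤ 2 * (1 + x ^ 2)
      rw [abs_of_nonneg (by positivity)]; nlinarith
    · show |2 * x| ≤ 2 * (1 + x)
      rw [abs_of_nonneg (by positivity)]; nlinarith
  -- moment functions
  set ρ : ℝ → ℝ := fun t => ∫ x in Ioi (0:ℝ), u t x with hρdef
  set I : ℝ → ℝ := fun t => ∫ x in Ioi (0:ℝ), x * u t x with hIdef
  set Q : ℝ → ℝ := fun t => ∫ x in Ioi (0:ℝ), x ^ 2 * u t x with hQdef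
  set W : ℝ → ℝ := fun t => ∫ x in Ioi (0:ℝ), (V t - d x) * u t x with hWdef
  set Z : ℝ → ℝ := fun t => ∫ x in Ioi (0:ℝ), 2 * x * (V t - d x) * u t x with hZdef
  -- integrability helper
  have hInt : ∀ t ∈ Ici (0:ℝ), ∀ (f : ℝ → ℝ) (C : ℝ), ContinuousOn f (Ici 0) →
      (∀ x ∈ Ici (0:ℝ), |f x| ≤ C * (1 + x ^ 2)) →
      IntegrableOn (fun x => f x * u t x) (Ioi 0) := by
    intro t ht f C hf hC
    exact LSN.integrable_weight (hu_int t ht) (fun x hx => hu_nn t ht x hx) hf hC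
  -- derivative identities
  have hρ' : ∀ t ∈ Ici (0:ℝ), HasDerivWithinAt ρ (V t ^ i0) (Ici 0) t := by
    intro t ht
    have h := hweak (fun _ => 1) (fun _ => 0) test1 t ht
    rw [hρdef]
    simpa using h
  have hI' : ∀ t ∈ Ici (0:ℝ), HasDerivWithinAt I (W t) (Ici 0) t := by
    intro t ht
    have h := hweak (fun x => x) (fun _ => 1) testx t ht
    rw [hIdef, hWdef]
    simpa using h
  have hQ' : ∀ t ∈ Ici (0:ℝ), HasDerivWithinAt Q (Z t) (Ici 0) t := by
    intro t ht
    have h := hweak (fun x => x ^ 2) (fun x => 2 * x) testx2 t ht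
    rw [hQdef, hZdef]
    simpa using h
  have hmass' : ∀ t ∈ Ici (0:ℝ), I t = M - V t := by
    intro t ht
    have := hmass t ht
    rw [hIdef]
    simp only
    linarith
  have hV' : ∀ t ∈ Ici (0:ℝ), HasDerivWithinAt V (-(W t)) (Ici 0) t := by
    intro t ht
    have h : HasDerivWithinAt (fun s => M - I s) (-(W t)) (Ici 0) t := by
      exact ((hasDerivWithinAt_const t (Ici (0:ℝ)) M).sub (hI' t ht)).congr_deriv (by ring)
    refine h.congr (fun s hs => ?_) ?_
    · have := hmass' s hs
      linarith
    · have := hmass' t ht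
      linarith
  -- nonnegativity
  have hρ_nn : ∀ t ∈ Ici (0:ℝ), 0 ≤ ρ t := by
    intro t ht
    rw [hρdef]
    exact setIntegral_nonneg measurableSet_Ioi fun x hx => hu_nn t ht x (mem_Ici.mpr (le_of_lt hx))
  have hI_nn : ∀ t ∈ Ici (0:ℝ), 0 ≤ I t := by
    intro t ht
    rw [hIdef]
    exact setIntegral_nonneg measurableSet_Ioi fun x hx =>
      mul_nonneg (le_of_lt hx) (hu_nn t ht x (mem_Ici.mpr (le_of_lt hx)))
  have hQ_nn : ∀ t ∈ Ici (0:ℝ), 0 ≤ Q t := by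
    intro t ht
    rw [hQdef]
    exact setIntegral_nonneg measurableSet_Ioi fun x hx =>
      mul_nonneg (by positivity) (hu_nn t ht x (mem_Ici.mpr (le_of_lt hx)))
  -- Step A : V ≥ d 0
  have hVlb : ∀ t ∈ Ici (0:ℝ), d 0 ≤ V t := by
    intro t ht
    refine LSN.barrier (f := V) (f' := fun s => -(W s)) le_rfl ht
      (fun s hs => hV' s (mem_Ici.mpr hs.1)) (le_of_lt hV0) ?_
    intro s hs hVs
    have hs0 : s ∈ Ici (0:ℝ) := mem_Ici.mpr hs.1
    have hW0 : W s ≤ 0 := by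
      rw [hWdef]
      refine setIntegral_nonpos measurableSet_Ioi fun x hx => ?_
      have hx0 : (0:ℝ) ≤ x := le_of_lt hx
      have h1 : V s - d x ≤ 0 := by
        have := hd_lb x hx0
        nlinarith [hα.le]
      exact mul_nonpos_of_nonpos_of_nonneg h1 (hu_nn s hs0 x hx0)
    show (0:ℝ) ≤ -W s
    linarith
  have hIleM : ∀ t ∈ Ici (0:ℝ), I t ≤ M := by
    intro t ht
    have h1 := hmass' t ht
    have h2 := hVlb t ht
    linarith
  have hVleM : ∀ t ∈ Ici (0:ℝ), V t ≤ M := by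
    intro t ht
    have h1 := hmass' t ht
    have h2 := hI_nn t ht
    linarith
  -- lower bound on W
  have hW_lb : ∀ t ∈ Ici (0:ℝ), (V t - d 0) * ρ t - β * I t ≤ W t := by
    intro t ht
    have hint1 : IntegrableOn (fun x => (V t - d 0) * u t x) (Ioi 0) := by
      refine hInt t ht _ |V t - d 0| continuousOn_const fun x hx => ?_
      have hx0 : (0:ℝ) ≤ x := hx
      nlinarith [abs_nonneg (V t - d 0), sq_nonneg x]
    have hint2 : IntegrableOn (fun x => β * (x * u t x)) (Ioi 0) := by
      have h := hInt t ht (fun x => β * x) β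
        ((continuous_const.mul continuous_id).continuousOn) (fun x hx => by
          have hx0 : (0:ℝ) ≤ x := hx
          show |β * x| ≤ β * (1 + x ^ 2)
          rw [abs_of_nonneg (by positivity)]
          nlinarith [sq_nonneg (x - 1)])
      simpa [mul_assoc] using h
    have hint3 : IntegrableOn (fun x => (V t - d x) * u t x) (Ioi 0) := by
      refine hInt t ht _ (|V t| + d 0 + β) (continuousOn_const.sub hd_cont) fun x hx => ?_
      have hx0 : (0:ℝ) ≤ x := hx
      have h1 := hd_ub x hx0
      have h2 := hd_lb x hx0
      have hdx : (0:ℝ) ≤ d x := by nlinarith [hα.le]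
      have h4 : |V t - d x| ≤ |V t| + d x :=
        calc |V t - d x| ≤ |V t| + |d x| := abs_sub _ _
          _ = |V t| + d x := by rw [abs_of_nonneg hdx]
      have hA : (0:ℝ) ≤ |V t| + d 0 := by positivity
      have hx1 : (0:ℝ) ≤ 1 + x ^ 2 - x := by nlinarith [sq_nonneg (2 * x - 1)]
      nlinarith [mul_nonneg hA (sq_nonneg x), hβ.le, mul_nonneg hA hx1]
    have hint12 : IntegrableOn (fun x => (V t - d 0) * u t x - β * (x * u t x)) (Ioi 0) :=
      hint1.sub hint2
    have hmono : ∫ x in Ioi (0:ℝ), ((V t - d 0) * u t x - β * (x * u t x)) ≤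
        ∫ x in Ioi (0:ℝ), (V t - d x) * u t x := by
      refine setIntegral_mono_on hint12 hint3 measurableSet_Ioi fun x hx => ?_
      have hx0 : (0:ℝ) ≤ x := le_of_lt hx
      have h1 := hd_ub x hx0
      have hu0 := hu_nn t ht x hx0
      have h2 : (V t - d 0) - β * x ≤ V t - d x := by linarith
      calc (V t - d 0) * u t x - β * (x * u t x) = ((V t - d 0) - β * x) * u t x := by ring
        _ ≤ (V t - d x) * u t x := mul_le_mul_of_nonneg_right h2 hu0
    have hlin : ∫ x in Ioi (0:ℝ), ((V t - d 0) * u t x - β * (x * u t x)) =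
        (V t - d 0) * ρ t - β * I t := by
      rw [integral_sub hint1 hint2, integral_const_mul, integral_const_mul, hρdef, hIdef]
    rw [hWdef]
    rw [hlin] at hmono
    exact hmono
  have hW_ge : ∀ t ∈ Ici (0:ℝ), -(β * M) ≤ W t := by
    intro t ht
    have h1 := hW_lb t ht
    have h2 := hVlb t ht
    have h3 := hρ_nn t ht
    have h4 := hIleM t ht
    have h5 := hI_nn t ht
    nlinarith
  -- monotonicity of ρ
  have hρ_mono : MonotoneOn ρ (Ici (0:ℝ)) := by
    refine monotoneOn_of_hasDerivWithinAt_nonneg (f' := fun t => V t ^ i0) (convex_Ici 0)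
      (fun t ht => (hρ' t ht).continuousWithinAt) (fun t ht => ?_) (fun t ht => ?_)
    · rw [interior_Ici] at ht ⊢
      exact (hρ' t (mem_Ici.mpr (le_of_lt ht))).mono Ioi_subset_Ici_self
    · rw [interior_Ici] at ht
      have := hVlb t (mem_Ici.mpr (le_of_lt ht))
      exact pow_nonneg (by linarith) i0
  -- upper bound on Z
  have hZ_ub : ∀ t ∈ Ici (0:ℝ), Z t ≤ 2 * M * (V t - d 0) - 2 * α * Q t := by
    intro t ht
    have hVt := hVlb t ht
    have hVtM := hVleM t ht
    have hint1 : IntegrableOn (fun x => 2 * x * (V t - d x) * u t x) (Ioi 0) := by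
      refine hInt t ht (fun x => 2 * x * (V t - d x)) (2 * (|V t| + d 0 + β))
        (((continuous_const.mul continuous_id).continuousOn).mul
          (continuousOn_const.sub hd_cont)) (fun x hx => ?_)
      have hx0 : (0:ℝ) ≤ x := hx
      have h1 := hd_ub x hx0
      have h2 := hd_lb x hx0
      have hdx : (0:ℝ) ≤ d x := by nlinarith [hα.le]
      show |2 * x * (V t - d x)| ≤ 2 * (|V t| + d 0 + β) * (1 + x ^ 2)
      have h3 : |2 * x * (V t - d x)| = 2 * x * |V t - d x| := by
        rw [abs_mul, abs_of_nonneg (by positivity : (0:ℝ) ≤ 2 * x)]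
      have h4 : |V t - d x| ≤ |V t| + d x :=
        calc |V t - d x| ≤ |V t| + |d x| := abs_sub _ _
          _ = |V t| + d x := by rw [abs_of_nonneg hdx]
      rw [h3]
      have hA : (0:ℝ) ≤ |V t| + d 0 := by positivity
      have hx1 : (0:ℝ) ≤ 1 + x ^ 2 - x := by nlinarith [sq_nonneg (2 * x - 1)]
      have k1 : 2 * x * |V t - d x| ≤ 2 * x * (|V t| + d x) :=
        mul_le_mul_of_nonneg_left h4 (by positivity)
      have k2 : 2 * x * (|V t| + d x) ≤ 2 * x * (|V t| + d 0 + β * x) :=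
        mul_le_mul_of_nonneg_left (by linarith) (by positivity)
      nlinarith [mul_nonneg hA hx1, hβ.le]
    have hint2a : IntegrableOn (fun x => (2 * (V t - d 0)) * (x * u t x)) (Ioi 0) := by
      have h := hInt t ht (fun x => (2 * (V t - d 0)) * x) |2 * (V t - d 0)|
        ((continuous_const.mul continuous_id).continuousOn) (fun x hx => by
          have hx0 : (0:ℝ) ≤ x := hx
          show |2 * (V t - d 0) * x| ≤ |2 * (V t - d 0)| * (1 + x ^ 2)
          rw [abs_mul, abs_of_nonneg hx0]
          nlinarith [abs_nonneg (2 * (V t - d 0)), sq_nonneg x, sq_nonneg (x - 1)])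
      simpa [mul_assoc] using h
    have hint2b : IntegrableOn (fun x => (2 * α) * (x ^ 2 * u t x)) (Ioi 0) := by
      have h := hInt t ht (fun x => (2 * α) * x ^ 2) (2 * α)
        ((continuous_const.mul (continuous_pow 2)).continuousOn) (fun x hx => by
          have hx0 : (0:ℝ) ≤ x := hx
          show |2 * α * x ^ 2| ≤ 2 * α * (1 + x ^ 2)
          rw [abs_of_nonneg (by positivity)]
          nlinarith [hα.le, sq_nonneg x])
      simpa [mul_assoc] using h
    have hint2 : IntegrableOn
        (fun x => (2 * (V t - d 0)) * (x * u t x) - (2 * α) * (x ^ 2 * u t x)) (Ioi 0) :=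
      hint2a.sub hint2b
    have hmono : ∫ x in Ioi (0:ℝ), 2 * x * (V t - d x) * u t x ≤
        ∫ x in Ioi (0:ℝ), ((2 * (V t - d 0)) * (x * u t x) - (2 * α) * (x ^ 2 * u t x)) := by
      refine setIntegral_mono_on hint1 hint2 measurableSet_Ioi fun x hx => ?_
      have hx0 : (0:ℝ) ≤ x := le_of_lt hx
      have hu0 := hu_nn t ht x hx0
      have hlb := hd_lb x hx0
      have key : 0 ≤ (d x - (d 0 + α * x)) * (x * u t x) :=
        mul_nonneg (by linarith) (mul_nonneg hx0 hu0)
      nlinarith [key]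
    have hlin : ∫ x in Ioi (0:ℝ),
        ((2 * (V t - d 0)) * (x * u t x) - (2 * α) * (x ^ 2 * u t x)) =
        (2 * (V t - d 0)) * I t - (2 * α) * Q t := by
      rw [integral_sub hint2a hint2b, integral_const_mul, integral_const_mul, hIdef, hQdef]
    rw [hZdef]
    rw [hlin] at hmono
    have hVI : (V t - d 0) * I t ≤ (V t - d 0) * M :=
      mul_le_mul_of_nonneg_left (hIleM t ht) (by linarith)
    show (∫ x in Ioi (0:ℝ), 2 * x * (V t - d x) * u t x) ≤ 2 * M * (V t - d 0) - 2 * α * Q t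
    nlinarith [hmono, hVI]
  -- Step B : V dips below d 0 + δ beyond any time
  have hdip : ∀ δ : ℝ, 0 < δ → ∀ T : ℝ, 0 ≤ T → ∃ t, T ≤ t ∧ V t < d 0 + δ := by
    intro δ hδ T hT
    by_contra hcon
    push_neg at hcon
    set c := (d 0 + δ) ^ i0 with hcdef
    have hc0 : 0 < c := pow_pos (by linarith) i0
    have hρgrow : ∀ t, T ≤ t → ρ T + c * (t - T) ≤ ρ t := by
      intro t htT
      refine LSN.growth_lower (f' := fun s => V s ^ i0) hT htT
        (fun s hs => hρ' s (mem_Ici.mpr (le_trans hT hs.1))) ?_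
      intro s hs
      have h1 : d 0 + δ ≤ V s := hcon s hs.1
      exact pow_le_pow_left₀ (by linarith) h1 i0
    set t₁ := T + max 0 ((β * M + M + 1) / δ - ρ T) / c with ht₁def
    have hmax0 : 0 ≤ max 0 ((β * M + M + 1) / δ - ρ T) := le_max_left _ _
    have ht₁T : T ≤ t₁ := by
      have : 0 ≤ max 0 ((β * M + M + 1) / δ - ρ T) / c := div_nonneg hmax0 hc0.le
      rw [ht₁def]; linarith
    have ht₁0 : 0 ≤ t₁ := le_trans hT ht₁T
    have hρt₁ : (β * M + M + 1) / δ ≤ ρ t₁ := by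
      have h1 := hρgrow t₁ ht₁T
      have h2 : c * (max 0 ((β * M + M + 1) / δ - ρ T) / c) =
          max 0 ((β * M + M + 1) / δ - ρ T) := by
        field_simp
      have h3 : (β * M + M + 1) / δ - ρ T ≤ max 0 ((β * M + M + 1) / δ - ρ T) := le_max_right _ _
      have h4 : t₁ - T = max 0 ((β * M + M + 1) / δ - ρ T) / c := by rw [ht₁def]; ring
      rw [h4, h2] at h1
      linarith
    have hIgrow : I t₁ + (M + 1) * (t₁ + 1 - t₁) ≤ I (t₁ + 1) := by
      refine LSN.growth_lower (f' := W) ht₁0 (by linarith)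
        (fun s hs => hI' s (mem_Ici.mpr (le_trans ht₁0 hs.1))) ?_
      intro s hs
      have hs0 : s ∈ Ici (0:ℝ) := mem_Ici.mpr (le_trans ht₁0 hs.1)
      have hsT : T ≤ s := le_trans ht₁T hs.1
      have h1 := hW_lb s hs0
      have h2 : d 0 + δ ≤ V s := hcon s hsT
      have h3 : ρ t₁ ≤ ρ s := hρ_mono (mem_Ici.mpr ht₁0) hs0 hs.1
      have h4 := hIleM s hs0
      have h5 := hρ_nn s hs0
      have h6 : β * M + M + 1 ≤ δ * ρ s := by
        have h7 : δ * ((β * M + M + 1) / δ) = β * M + M + 1 := by field_simp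
        have h8 : δ * ((β * M + M + 1) / δ) ≤ δ * ρ s :=
          mul_le_mul_of_nonneg_left (by linarith) hδ.le
        linarith
      have h7 : δ * ρ s ≤ (V s - d 0) * ρ s := mul_le_mul_of_nonneg_right (by linarith) h5
      have h8 : β * I s ≤ β * M := mul_le_mul_of_nonneg_left h4 hβ.le
      linarith
    have h9 := hIleM (t₁ + 1) (mem_Ici.mpr (by linarith))
    have h10 := hI_nn t₁ (mem_Ici.mpr ht₁0)
    have h11 : (M + 1) * (t₁ + 1 - t₁) = M + 1 := by ring
    linarith
  -- Step C : eventually V ≤ d 0 + 2δ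
  have hlimsup : ∀ δ : ℝ, 0 < δ → ∃ T : ℝ, 0 ≤ T ∧ ∀ t, T ≤ t → V t ≤ d 0 + 2 * δ := by
    intro δ hδ
    by_contra hcon
    push_neg at hcon
    set τ := δ / (β * M) with hτdef
    have hτ : 0 < τ := div_pos hδ (mul_pos hβ hM)
    have hτ' : τ ≠ 0 := ne_of_gt hτ
    set c := (d 0 + δ) ^ i0 with hcdef
    have hc0 : 0 < c := pow_pos (by linarith) i0
    set R := (β * M + M / τ) / δ with hRdef
    have hVcont : ∀ a b : ℝ, 0 ≤ a → ContinuousOn V (Icc a b) := by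
      intro a b ha0 s hs
      exact ((hV' s (mem_Ici.mpr (le_trans ha0 hs.1))).continuousWithinAt).mono
        (fun r hr => le_trans ha0 hr.1)
    have hup : ∀ a b : ℝ, 0 ≤ a → a ≤ b → V a < d 0 + δ → d 0 + 2 * δ < V b →
        ρ a + c * τ ≤ ρ b ∧ ρ a < R := by
      intro a b ha hab hVa hVb
      obtain ⟨s₁, s₂, has₁, hs₁s₂, hs₂b, hfs₁, hfs₂, hbet⟩ :=
        LSN.crossing hab (hVcont a b ha) (by linarith : d 0 + δ < d 0 + 2 * δ) hVa hVb
      have hs₁0 : 0 ≤ s₁ := le_trans ha has₁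
      have hs₂0 : 0 ≤ s₂ := le_trans hs₁0 hs₁s₂
      have hdur : V s₂ ≤ V s₁ + (β * M) * (s₂ - s₁) := by
        refine LSN.growth_upper (f' := fun s => -W s) hs₁0 hs₁s₂
          (fun s hs => hV' s (mem_Ici.mpr (le_trans hs₁0 hs.1))) ?_
        intro s hs
        have := hW_ge s (mem_Ici.mpr (le_trans hs₁0 hs.1))
        show -W s ≤ β * M
        linarith
      have hdur' : τ ≤ s₂ - s₁ := by
        rw [hfs₁, hfs₂] at hdur
        rw [hτdef, div_le_iff₀ (mul_pos hβ hM)]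
        nlinarith
      have hρgain : ρ s₁ + c * (s₂ - s₁) ≤ ρ s₂ := by
        refine LSN.growth_lower (f' := fun s => V s ^ i0) hs₁0 hs₁s₂
          (fun s hs => hρ' s (mem_Ici.mpr (le_trans hs₁0 hs.1))) ?_
        intro s hs
        have h1 := (hbet s hs).1
        exact pow_le_pow_left₀ (by linarith) (by linarith) i0
      have h1 : ρ a ≤ ρ s₁ := hρ_mono (mem_Ici.mpr ha) (mem_Ici.mpr hs₁0) has₁
      have h2 : ρ s₂ ≤ ρ b := hρ_mono (mem_Ici.mpr hs₂0)
        (mem_Ici.mpr (le_trans hs₂0 hs₂b)) hs₂b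
      constructor
      · have h3 : c * τ ≤ c * (s₂ - s₁) := mul_le_mul_of_nonneg_left hdur' hc0.le
        linarith
      · by_contra hR
        push_neg at hR
        have hMτ : 0 < M / τ := div_pos hM hτ
        have hIgr : I s₁ + (M / τ) * (s₂ - s₁) ≤ I s₂ := by
          refine LSN.growth_lower (f' := W) hs₁0 hs₁s₂
            (fun s hs => hI' s (mem_Ici.mpr (le_trans hs₁0 hs.1))) ?_
          intro s hs
          have hs0 : s ∈ Ici (0:ℝ) := mem_Ici.mpr (le_trans hs₁0 hs.1)
          have hWlb := hW_lb s hs0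
          have hVs := (hbet s hs).1
          have hρs : ρ a ≤ ρ s := hρ_mono (mem_Ici.mpr ha) hs0 (le_trans has₁ hs.1)
          have hρs0 := hρ_nn s hs0
          have hIs := hIleM s hs0
          have hδR : δ * R = β * M + M / τ := by
            rw [hRdef]
            field_simp
          have h7 : δ * ρ s ≤ (V s - d 0) * ρ s := mul_le_mul_of_nonneg_right (by linarith) hρs0
          have h8 : β * I s ≤ β * M := mul_le_mul_of_nonneg_left hIs hβ.le
          have h9 : δ * R ≤ δ * ρ s := mul_le_mul_of_nonneg_left (by linarith) hδ.le
          linarith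
        have hIs₂ : I s₂ = M - V s₂ := hmass' s₂ (mem_Ici.mpr hs₂0)
        have hIs₁ : 0 ≤ I s₁ := hI_nn s₁ (mem_Ici.mpr hs₁0)
        have h10 : M / τ * τ = M := div_mul_cancel₀ M hτ'
        have h11 : M / τ * τ ≤ M / τ * (s₂ - s₁) := mul_le_mul_of_nonneg_left hdur' hMτ.le
        rw [hfs₂] at hIs₂
        linarith
    have haux : ∀ n : ℕ, ∃ t, 0 ≤ t ∧ ρ 0 + n * (c * τ) ≤ ρ t := by
      intro n
      induction n with
      | zero => exact ⟨0, le_rfl, by simp⟩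
      | succ n ih =>
        obtain ⟨t, ht0, hρt⟩ := ih
        obtain ⟨a, hta, hVa⟩ := hdip δ hδ t ht0
        have ha0 : 0 ≤ a := le_trans ht0 hta
        obtain ⟨b, hab, hVb⟩ := hcon a ha0
        obtain ⟨hgain, _⟩ := hup a b ha0 hab hVa hVb
        refine ⟨b, le_trans ha0 hab, ?_⟩
        have h1 : ρ t ≤ ρ a := hρ_mono (mem_Ici.mpr ht0) (mem_Ici.mpr ha0) hta
        push_cast
        nlinarith
    obtain ⟨n, hn⟩ := exists_nat_ge ((R - ρ 0) / (c * τ))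
    have hcτ : 0 < c * τ := mul_pos hc0 hτ
    obtain ⟨t, ht0, hρt⟩ := haux n
    have hρR : R ≤ ρ t := by
      rw [div_le_iff₀ hcτ] at hn
      linarith
    obtain ⟨a, hta, hVa⟩ := hdip δ hδ t ht0
    have ha0 : 0 ≤ a := le_trans ht0 hta
    obtain ⟨b, hab, hVb⟩ := hcon a ha0
    obtain ⟨_, hlt⟩ := hup a b ha0 hab hVa hVb
    have h1 : ρ t ≤ ρ a := hρ_mono (mem_Ici.mpr ht0) (mem_Ici.mpr ha0) hta
    linarith
  -- Step D : conclusion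
  rw [Metric.tendsto_atTop]
  intro ε hε
  have hδ : 0 < α * ε / (4 * M) := by positivity
  set δ := α * ε / (4 * M) with hδdef
  obtain ⟨T, hT0, hTbnd⟩ := hlimsup δ hδ
  have hM' : (M:ℝ) ≠ 0 := ne_of_gt hM
  have h4Mδ : 2 * M * (2 * δ) = α * ε := by
    rw [hδdef]
    field_simp
    ring
  have hQbnd : ∀ s, T ≤ s → ε ≤ Q s → Z s ≤ -(α * ε) := by
    intro s hsT hQs
    have hs0 : s ∈ Ici (0:ℝ) := mem_Ici.mpr (le_trans hT0 hsT)
    have h1 := hZ_ub s hs0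
    have h2 := hTbnd s hsT
    have h3 : 2 * M * (V s - d 0) ≤ α * ε := by
      have h4 := mul_le_mul_of_nonneg_left (show V s - d 0 ≤ 2 * δ by linarith)
        (show (0:ℝ) ≤ 2 * M by positivity)
      linarith
    have h5 : α * ε ≤ α * Q s := mul_le_mul_of_nonneg_left hQs hα.le
    linarith
  have part1 : ∃ T', T ≤ T' ∧ Q T' ≤ ε := by
    by_contra h
    push_neg at h
    have hαε : 0 < α * ε := mul_pos hα hε
    set b := T + Q T / (α * ε) + 1 with hbdef
    have hQT0 : 0 ≤ Q T := hQ_nn T (mem_Ici.mpr hT0)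
    have hbT : T ≤ b := by
      have : 0 ≤ Q T / (α * ε) := div_nonneg hQT0 hαε.le
      rw [hbdef]; linarith
    have hgu : Q b ≤ Q T + (-(α * ε)) * (b - T) := by
      refine LSN.growth_upper (f' := Z) hT0 hbT
        (fun s hs => hQ' s (mem_Ici.mpr (le_trans hT0 hs.1))) ?_
      intro s hs
      exact hQbnd s hs.1 (le_of_lt (h s hs.1))
    have h0b : 0 ≤ Q b := hQ_nn b (mem_Ici.mpr (le_trans hT0 hbT))
    have hc : α * ε * (Q T / (α * ε)) = Q T := by field_simp
    have hb1 : b - T = Q T / (α * ε) + 1 := by rw [hbdef]; ring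
    rw [hb1] at hgu
    nlinarith
  obtain ⟨T', hTT', hQT'⟩ := part1
  have hT'0 : 0 ≤ T' := le_trans hT0 hTT'
  have hstay : ∀ t, T' ≤ t → Q t ≤ ε := by
    intro t ht
    have hbar : -ε ≤ -Q t := by
      refine LSN.barrier (f := fun s => -Q s) (f' := fun s => -(Z s)) (c := -ε) hT'0 ht
        (fun s hs => (hQ' s (mem_Ici.mpr (le_trans hT'0 hs.1))).neg)
        (by linarith) ?_
      intro s hs hle
      have := hQbnd s (le_trans hTT' hs.1) (by linarith)
      have hαε : 0 < α * ε := mul_pos hα hε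
      show 0 ≤ -Z s
      linarith
    linarith
  refine ⟨T', fun t ht => ?_⟩
  have h1 : Q t ≤ ε := hstay t ht
  have h2 : 0 ≤ Q t := hQ_nn t (mem_Ici.mpr (le_trans hT'0 ht))
  rw [Real.dist_eq, sub_zero]
  have hQt : (∫ x in Ioi (0:ℝ), x ^ 2 * u t x) = Q t := by rw [hQdef]
  rw [hQt, abs_of_nonneg (by linarith : (0:ℝ) ≤ 1 / 2 * Q t)]
  linarith
end
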